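/- arXiv:2509.04364 — 4 statements merged into one kernel-verified Lean document; each statement's English description precedes it below -/
import Mathlib

section
/- Let I be an ideal of S and suppose that in_{x_n}(I) = C(x_n,I) ∩ (N(x_n,I) + (x_n)) is a nondegenerate geometric vertex decomposition. Assume g ∈ S has no term divisible by x_n and that Tr((x_n·g)^{p−1}•) is a Frobenius splitting of S that compatibly splits both C(x_n,I) and N(x_n,I). Suppose further that there exists u ∈ C(x_n,I) which lies in no associated prime of N(x_n,I) and such that u divides g. Then there exists r ∈ S with no term divisible by x_n such that Tr((x_n·g + r)^{p−1}•) is a Frobenius splitting of S that compatibly splits I. -/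
open MvPolynomial

/-- The trace map on a polynomial ring: on a monomial `m`, it returns
`(m·x_1⋯x_n)^{1/p}/(x_1⋯x_n)` if `m·x_1⋯x_n` is a `p`-th power of a monomial,
and `0` otherwise, extended `κ`-linearly. -/
noncomputable def Tr (κ : Type*) [CommSemiring κ] {σ : Type*} [Fintype σ] [DecidableEq σ]
    (p : ℕ) (f : MvPolynomial σ κ) : MvPolynomial σ κ :=
  ∑ b ∈ f.support,
    if ∀ i : σ, (b i + 1) % p = 0 then
      MvPolynomial.monomial (Finsupp.equivFunOnFinite.symm fun i => (b i + 1) / p - 1) (f.coeff b)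
    else 0

/-- A Frobenius splitting: an additive map `φ` with `φ(a^p·b) = a·φ(b)` and `φ(1) = 1`. -/
def IsFrobSplitting {R : Type*} [CommSemiring R] (p : ℕ) (φ : R → R) : Prop :=
  (∀ a b : R, φ (a + b) = φ a + φ b) ∧ (∀ a b : R, φ (a ^ p * b) = a * φ b) ∧ φ 1 = 1

/-- `φ` compatibly splits the ideal `I` if `φ(I) ⊆ I`. -/
def CompatiblySplits {R : Type*} [CommSemiring R] (φ : R → R) (I : Ideal R) : Prop :=
  ∀ a ∈ I, φ a ∈ I

/-- `f` has no term divisible by the variable `y`. -/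
def NoVar {κ : Type*} [CommSemiring κ] {σ : Type*} (y : σ) (f : MvPolynomial σ κ) : Prop :=
  ∀ b ∈ f.support, (b : σ →₀ ℕ) y = 0

/-- `in_y(f)`: the sum of the terms of `f` of highest degree in the variable `y`. -/
noncomputable def inY {κ : Type*} [CommSemiring κ] {σ : Type*} [DecidableEq σ]
    (y : σ) (f : MvPolynomial σ κ) : MvPolynomial σ κ :=
  ∑ b ∈ f.support,
    if (b : σ →₀ ℕ) y = f.degreeOf y then MvPolynomial.monomial b (f.coeff b) else 0

/-- `in_y(I)`, the ideal generated by `in_y(f)` for `f ∈ I`. -/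
noncomputable def inYIdeal {κ : Type*} [CommSemiring κ] {σ : Type*} [DecidableEq σ]
    (y : σ) (I : Ideal (MvPolynomial σ κ)) : Ideal (MvPolynomial σ κ) :=
  Ideal.span { g | ∃ f ∈ I, g = inY y f }

/-- The saturation `J : x^∞`. -/
def satPow {R : Type*} [CommRing R] (J : Ideal R) (x : R) : Ideal R where
  carrier := { f | ∃ k : ℕ, x ^ k * f ∈ J }
  zero_mem' := ⟨0, by simp⟩
  add_mem' := by
    rintro a b ⟨k, hk⟩ ⟨l, hl⟩
    refine ⟨k + l, ?_⟩
    have h := J.add_mem (J.mul_mem_left (x ^ l) hk) (J.mul_mem_left (x ^ k) hl)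
    have e : x ^ (k + l) * (a + b) = x ^ l * (x ^ k * a) + x ^ k * (x ^ l * b) := by ring
    rwa [e]
  smul_mem' := by
    rintro c a ⟨k, hk⟩
    refine ⟨k, ?_⟩
    have h := J.mul_mem_left c hk
    have e : x ^ k * (c • a) = c * (x ^ k * a) := by
      simp [smul_eq_mul]; ring
    rwa [e]

/-- `C(y,I) = in_y(I) : y^∞`. -/
noncomputable def Cyd {κ : Type*} [Field κ] {σ : Type*} [DecidableEq σ]
    (y : σ) (I : Ideal (MvPolynomial σ κ)) : Ideal (MvPolynomial σ κ) :=
  satPow (inYIdeal y I) (X y)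

/-- `N(y,I)`, the ideal generated by the elements of `I` having no term divisible by `y`. -/
noncomputable def Nyd {κ : Type*} [Field κ] {σ : Type*} (y : σ) (I : Ideal (MvPolynomial σ κ)) :
    Ideal (MvPolynomial σ κ) :=
  Ideal.span { f | f ∈ I ∧ NoVar y f }

/-- `I` admits a geometric vertex decomposition at `y`. -/
def IsGVD {κ : Type*} [Field κ] {σ : Type*} [DecidableEq σ]
    (y : σ) (I : Ideal (MvPolynomial σ κ)) : Prop :=
  inYIdeal y I = Cyd y I ⊓ (Nyd y I + Ideal.span {X y}) ∧
    ((Cyd y I).radical = (Nyd y I).radical ∨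
      ∀ P ∈ (Cyd y I).minimalPrimes, P ∉ (Nyd y I).minimalPrimes)

/-- A nondegenerate geometric vertex decomposition. -/
def IsNondegGVD {κ : Type*} [Field κ] {σ : Type*} [DecidableEq σ]
    (y : σ) (I : Ideal (MvPolynomial σ κ)) : Prop :=
  IsGVD y I ∧ Cyd y I ≠ ⊤ ∧ (Cyd y I).radical ≠ (Nyd y I).radical

/-- A degenerate geometric vertex decomposition. -/
def IsDegenGVD {κ : Type*} [Field κ] {σ : Type*} [DecidableEq σ]
    (y : σ) (I : Ideal (MvPolynomial σ κ)) : Prop :=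
  IsGVD y I ∧ (Cyd y I = ⊤ ∨ (Cyd y I).radical = (Nyd y I).radical)

/-- The ideal `N` has no embedded primes: every associated prime is minimal. -/
def NoEmbeddedPrimes {R : Type*} [CommRing R] (N : Ideal R) : Prop :=
  associatedPrimes R (R ⧸ N) ⊆ N.minimalPrimes

/-- `q` is a nonzerodivisor modulo `N`. -/
def NZDMod {R : Type*} [CommRing R] (N : Ideal R) (q : R) : Prop :=
  ∀ a : R, q * a ∈ N → a ∈ N

namespace GVDAux

open MvPolynomial

/-! ### The isomorphism with `Polynomial (MvPolynomial (Fin n) κ)` -/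

noncomputable def psi (κ : Type*) [CommSemiring κ] (n : ℕ) :
    MvPolynomial (Fin (n + 1)) κ ≃ₐ[κ] Polynomial (MvPolynomial (Fin n) κ) :=
  (renameEquiv κ (Equiv.swap 0 (Fin.last n))).trans (MvPolynomial.finSuccEquiv κ n)

noncomputable def iot (κ : Type*) [CommSemiring κ] (n : ℕ) :
    MvPolynomial (Fin n) κ →ₐ[κ] MvPolynomial (Fin (n + 1)) κ :=
  (rename fun i => Equiv.swap (0 : Fin (n + 1)) (Fin.last n) i.succ).comp (AlgHom.id κ _)

section Infra

variable {κ : Type*} [CommSemiring κ] {n : ℕ}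

lemma psi_X_last : psi κ n (X (Fin.last n)) = Polynomial.X := by
  simp [psi, Equiv.swap_apply_right, finSuccEquiv_X_zero]

lemma finSuccEquiv_rename_succ (q : MvPolynomial (Fin n) κ) :
    MvPolynomial.finSuccEquiv κ n (rename Fin.succ q) = Polynomial.C q := by
  induction q using MvPolynomial.induction_on with
  | C a => simp [finSuccEquiv_apply]
  | add f g hf hg => simp [map_add, hf, hg]
  | mul_X f i ih => rw [map_mul, rename_X, map_mul, finSuccEquiv_X_succ, ih, ← Polynomial.C_mul]

lemma psi_iot (q : MvPolynomial (Fin n) κ) : psi κ n (iot κ n q) = Polynomial.C q := by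
  show MvPolynomial.finSuccEquiv κ n (rename _ (rename _ q)) = _
  rw [rename_rename]
  have hfun : ((Equiv.swap (0 : Fin (n+1)) (Fin.last n) : Fin (n+1) → Fin (n+1)) ∘
      fun i : Fin n => Equiv.swap (0 : Fin (n+1)) (Fin.last n) i.succ) = Fin.succ := by
    funext i; simp [Function.comp, Equiv.swap_apply_self]
  rw [hfun]; exact finSuccEquiv_rename_succ q

lemma iot_eq_symm (q : MvPolynomial (Fin n) κ) :
    iot κ n q = (psi κ n).symm (Polynomial.C q) := by
  rw [← psi_iot]; exact ((psi κ n).symm_apply_apply _).symm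

lemma natDegree_psi (f : MvPolynomial (Fin (n + 1)) κ) :
    (psi κ n f).natDegree = degreeOf (Fin.last n) f := by
  show (MvPolynomial.finSuccEquiv κ n (rename _ f)).natDegree = _
  rw [natDegree_finSuccEquiv]
  have := degreeOf_rename_of_injective (p := f)
    (f := (Equiv.swap (0 : Fin (n+1)) (Fin.last n) : Fin (n+1) → Fin (n+1)))
    (Equiv.injective _) (Fin.last n)
  rwa [Equiv.swap_apply_right] at this

lemma psi_coeff_coeff (m : Fin n →₀ ℕ) (f : MvPolynomial (Fin (n + 1)) κ) (e : ℕ) :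
    coeff m ((psi κ n f).coeff e) =
      coeff (Finsupp.mapDomain (Equiv.swap (0 : Fin (n+1)) (Fin.last n)) (Finsupp.cons e m)) f := by
  show coeff m ((MvPolynomial.finSuccEquiv κ n (rename _ f)).coeff e) = _
  rw [finSuccEquiv_coeff_coeff]
  set d := Finsupp.mapDomain (Equiv.swap (0 : Fin (n+1)) (Fin.last n)) (Finsupp.cons e m) with hd
  have h1 : Finsupp.cons e m = Finsupp.mapDomain (Equiv.swap (0 : Fin (n+1)) (Fin.last n)) d := by
    rw [hd, ← Finsupp.mapDomain_comp]
    have h2 : ((Equiv.swap (0 : Fin (n+1)) (Fin.last n) : Fin (n+1) → Fin (n+1)) ∘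
        (Equiv.swap (0 : Fin (n+1)) (Fin.last n) : Fin (n+1) → Fin (n+1))) = id := by
      funext i; simp [Function.comp, Equiv.swap_apply_self]
    rw [h2, Finsupp.mapDomain_id]
  rw [h1, coeff_rename_mapDomain _ (Equiv.injective _)]

lemma noVar_iff_degreeOf {f : MvPolynomial (Fin (n + 1)) κ} :
    NoVar (Fin.last n) f ↔ degreeOf (Fin.last n) f = 0 := by
  rw [degreeOf_eq_sup]
  constructor
  · intro h
    exact (Finset.sup_eq_bot_iff _ _).mpr fun b hb => h b hb
  · intro h b hb
    exact (Finset.sup_eq_bot_iff _ _).mp h b hb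

lemma noVar_iff_natDegree {f : MvPolynomial (Fin (n + 1)) κ} :
    NoVar (Fin.last n) f ↔ (psi κ n f).natDegree = 0 := by
  rw [noVar_iff_degreeOf, natDegree_psi]

lemma noVar_iot (q : MvPolynomial (Fin n) κ) : NoVar (Fin.last n) (iot κ n q) := by
  rw [noVar_iff_natDegree, psi_iot]
  exact Polynomial.natDegree_C q

lemma exists_iot_of_noVar {f : MvPolynomial (Fin (n + 1)) κ} (h : NoVar (Fin.last n) f) :
    ∃ q, f = iot κ n q := by
  refine ⟨(psi κ n f).coeff 0, ?_⟩
  have h1 : psi κ n f = Polynomial.C ((psi κ n f).coeff 0) :=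
    Polynomial.eq_C_of_natDegree_eq_zero (noVar_iff_natDegree.mp h)
  rw [iot_eq_symm, ← h1, (psi κ n).symm_apply_apply]

end Infra

/-! ### Trace lemmas -/

noncomputable def trm (κ : Type*) [CommSemiring κ] {σ : Type*} [Fintype σ] [DecidableEq σ]
    (p : ℕ) (b : σ →₀ ℕ) (c : κ) : MvPolynomial σ κ :=
  if ∀ i : σ, (b i + 1) % p = 0 then
    MvPolynomial.monomial (Finsupp.equivFunOnFinite.symm fun i => (b i + 1) / p - 1) c
  else 0

section TraceLemmas

variable {κ : Type*} [CommSemiring κ] {σ : Type*} [Fintype σ] [DecidableEq σ] {p : ℕ}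

lemma trm_zero (b : σ →₀ ℕ) : trm κ p b (0 : κ) = 0 := by
  unfold trm; split <;> simp

lemma trm_add (b : σ →₀ ℕ) (c d : κ) : trm κ p b (c + d) = trm κ p b c + trm κ p b d := by
  unfold trm; split <;> simp

lemma trm_C_mul (b : σ →₀ ℕ) (a c : κ) : trm κ p b (a * c) = C a * trm κ p b c := by
  unfold trm; split <;> simp [C_mul_monomial]

lemma Tr_eq_sum {f : MvPolynomial σ κ} {B : Finset (σ →₀ ℕ)} (hB : f.support ⊆ B) :
    Tr κ p f = ∑ b ∈ B, trm κ p b (f.coeff b) := by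
  have h0 : Tr κ p f = ∑ b ∈ f.support, trm κ p b (f.coeff b) := rfl
  rw [h0]
  refine Finset.sum_subset hB fun b _ hb => ?_
  rw [notMem_support_iff.mp hb, trm_zero]

lemma Tr_zero : Tr κ p (0 : MvPolynomial σ κ) = 0 := by
  have h : (0 : MvPolynomial σ κ).support = ∅ := support_zero
  rw [Tr, h, Finset.sum_empty]

lemma Tr_add (f g : MvPolynomial σ κ) : Tr κ p (f + g) = Tr κ p f + Tr κ p g := by
  rw [Tr_eq_sum (B := f.support ∪ g.support) support_add,
    Tr_eq_sum (f := f) (B := f.support ∪ g.support) Finset.subset_union_left,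
    Tr_eq_sum (f := g) (B := f.support ∪ g.support) Finset.subset_union_right,
    ← Finset.sum_add_distrib]
  exact Finset.sum_congr rfl fun b _ => by rw [coeff_add, trm_add]

lemma Tr_sum {α : Type*} (s : Finset α) (h : α → MvPolynomial σ κ) :
    Tr κ p (∑ i ∈ s, h i) = ∑ i ∈ s, Tr κ p (h i) := by
  induction s using Finset.cons_induction with
  | empty => simp [Tr_zero]
  | cons a s ha ih => rw [Finset.sum_cons, Tr_add, ih, Finset.sum_cons]

lemma Tr_C_mul (c : κ) (f : MvPolynomial σ κ) : Tr κ p (C c * f) = C c * Tr κ p f := by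
  have hsupp : (C c * f).support ⊆ f.support := by
    rw [← smul_eq_C_mul]; exact Finsupp.support_smul
  rw [Tr_eq_sum hsupp, Tr_eq_sum (le_refl f.support), Finset.mul_sum]
  exact Finset.sum_congr rfl fun b _ => by rw [coeff_C_mul, trm_C_mul]

lemma trm_shift (hp : 0 < p) (b b' : σ →₀ ℕ) (c : κ) :
    trm κ p (p • b + b') c = monomial b 1 * trm κ p b' c := by
  have hcond : (∀ i : σ, ((p • b + b') i + 1) % p = 0) ↔ (∀ i : σ, (b' i + 1) % p = 0) := by
    refine forall_congr' fun i => ?_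
    have h : (p • b + b') i = p * b i + b' i := by
      simp [Finsupp.add_apply, Finsupp.smul_apply, mul_comm]
    rw [h, add_assoc, Nat.mul_add_mod]
  unfold trm
  by_cases h : ∀ i : σ, (b' i + 1) % p = 0
  · rw [if_pos (hcond.mpr h), if_pos h, monomial_mul, one_mul]
    have hidx : (Finsupp.equivFunOnFinite.symm fun i : σ => ((p • b + b') i + 1) / p - 1) =
        b + Finsupp.equivFunOnFinite.symm fun i : σ => ((b' i + 1) / p - 1) := by
      ext i
      simp only [Finsupp.add_apply, Finsupp.equivFunOnFinite_symm_apply_apply]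
      have h0 := Nat.div_add_mod (b' i + 1) p
      rw [h i, add_zero] at h0
      have hq : 1 ≤ (b' i + 1) / p := by
        rcases Nat.eq_zero_or_pos ((b' i + 1) / p) with h1 | h1
        · rw [h1, Nat.mul_zero] at h0; omega
        · exact h1
      have harith : (p • b) i = p * b i := by
        simp [Finsupp.smul_apply, mul_comm]
      rw [harith]
      have hthis : p * b i + b' i + 1 = p * (b i + (b' i + 1) / p) := by
        rw [Nat.mul_add]; omega
      rw [hthis, Nat.mul_div_cancel_left _ hp]
      omega
    rw [hidx]
  · rw [if_neg (fun hc => h (hcond.mp hc)), if_neg h, mul_zero]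

lemma Tr_monomial_pow_mul (hp : 0 < p) (b : σ →₀ ℕ) (f : MvPolynomial σ κ) :
    Tr κ p (monomial (p • b) 1 * f) = monomial b 1 * Tr κ p f := by
  classical
  have hsupp : (monomial (p • b) 1 * f).support ⊆
      f.support.map (addLeftEmbedding (p • b)) := by
    intro b'' hb''
    rw [mem_support_iff, coeff_monomial_mul'] at hb''
    by_cases hle : p • b ≤ b''
    · rw [if_pos hle] at hb''
      rw [Finset.mem_map]
      refine ⟨b'' - p • b, ?_, ?_⟩
      · rw [mem_support_iff]; intro h0; rw [h0, mul_zero] at hb''; exact hb'' rfl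
      · exact add_tsub_cancel_of_le hle
    · rw [if_neg hle] at hb''; exact absurd rfl hb''
  rw [Tr_eq_sum hsupp, Finset.sum_map, Tr_eq_sum (le_refl f.support), Finset.mul_sum]
  refine Finset.sum_congr rfl fun b' _ => ?_
  simp only [addLeftEmbedding_apply]
  rw [coeff_monomial_mul, one_mul, trm_shift hp]

lemma Tr_pow_mul [CharP κ p] [Fact p.Prime] (hk : ∀ c : κ, c ^ p = c)
    (f g : MvPolynomial σ κ) : Tr κ p (f ^ p * g) = f * Tr κ p g := by
  have hp : 0 < p := (Fact.out : p.Prime).pos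
  have hfp : f ^ p = ∑ b ∈ f.support, (monomial b (coeff b f)) ^ p := by
    conv_lhs => rw [as_sum f]
    exact map_sum (frobenius (MvPolynomial σ κ) p) _ _
  rw [hfp, Finset.sum_mul, Tr_sum]
  conv_rhs => rw [as_sum f, Finset.sum_mul]
  refine Finset.sum_congr rfl fun b _ => ?_
  have h1 : (monomial b (coeff b f)) ^ p = C ((coeff b f) ^ p) * monomial (p • b) 1 := by
    rw [monomial_pow, C_mul_monomial, mul_one]
  rw [h1, mul_assoc, Tr_C_mul, Tr_monomial_pow_mul hp, hk, ← mul_assoc, C_mul_monomial, mul_one]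

lemma Tr_eq_zero_of {y : σ} {f : MvPolynomial σ κ}
    (h : ∀ b ∈ f.support, (b : σ →₀ ℕ) y + 1 < p) : Tr κ p f = 0 := by
  rw [Tr]
  refine Finset.sum_eq_zero fun b hb => ?_
  rw [if_neg]
  intro hc
  have h2 := hc y
  rw [Nat.mod_eq_of_lt (h b hb)] at h2
  omega

end TraceLemmas

end GVDAux
namespace GVDAux

open MvPolynomial

section Structural

variable {p : ℕ} [Fact p.Prime] {κ : Type*} [Field κ] [CharP κ p] {n : ℕ}

lemma mem_satPow_iff {J : Ideal (MvPolynomial (Fin (n+1)) κ)} {x f : MvPolynomial (Fin (n+1)) κ} :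
    f ∈ satPow J x ↔ ∃ k : ℕ, x ^ k * f ∈ J := Iff.rfl

lemma support_ypow_mul_iot (k : ℕ) (q : MvPolynomial (Fin n) κ) :
    ∀ b ∈ (X (Fin.last n) ^ k * iot κ n q).support, (b : Fin (n+1) →₀ ℕ) (Fin.last n) = k := by
  intro b hb
  rw [X_pow_eq_monomial, mem_support_iff, coeff_monomial_mul'] at hb
  by_cases hle : Finsupp.single (Fin.last n) k ≤ b
  · rw [if_pos hle] at hb
    have hmem : b - Finsupp.single (Fin.last n) k ∈ (iot κ n q).support := by
      rw [mem_support_iff]; intro h0; rw [h0, mul_zero] at hb; exact hb rfl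
    have h0 := noVar_iot q _ hmem
    have h1 : (b - Finsupp.single (Fin.last n) k) (Fin.last n) = b (Fin.last n) - k := by
      rw [Finsupp.tsub_apply, Finsupp.single_eq_same]
    have h2 : k ≤ b (Fin.last n) := by
      have := hle (Fin.last n)
      rwa [Finsupp.single_eq_same] at this
    omega
  · rw [if_neg hle] at hb; exact absurd rfl hb

lemma kFrob {g : MvPolynomial (Fin (n+1)) κ}
    (hsplit : IsFrobSplitting p (fun a => Tr κ p ((X (Fin.last n) * g) ^ (p - 1) * a))) :
    ∀ c : κ, c ^ p = c := by
  intro c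
  obtain ⟨hadd, hsemi, hone⟩ := hsplit
  have h1 := hsemi (C c) 1
  have h2 : (X (Fin.last n) * g) ^ (p - 1) * (C c ^ p * 1) =
      C (c ^ p) * ((X (Fin.last n) * g) ^ (p - 1) * 1) := by
    rw [← C_pow]; ring
  simp only [h2, Tr_C_mul] at h1
  simp only [show (fun a => Tr κ p ((X (Fin.last n) * g) ^ (p - 1) * a)) 1 =
      Tr κ p ((X (Fin.last n) * g) ^ (p - 1) * 1) from rfl] at hone
  rw [hone, mul_one, mul_one] at h1
  exact C_injective _ κ h1

lemma Tr_one_pert {g r : MvPolynomial (Fin (n+1)) κ}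
    (hg : NoVar (Fin.last n) g) (hr : NoVar (Fin.last n) r)
    (h1 : Tr κ p ((X (Fin.last n) * g) ^ (p - 1) * 1) = 1) :
    Tr κ p ((X (Fin.last n) * g + r) ^ (p - 1) * 1) = 1 := by
  obtain ⟨g₀, rfl⟩ := exists_iot_of_noVar hg
  obtain ⟨r₀, rfl⟩ := exists_iot_of_noVar hr
  have hp1 : p - 1 + 1 = p := Nat.succ_pred_eq_of_pos (Fact.out : p.Prime).pos
  rw [mul_one] at h1 ⊢
  rw [add_pow, hp1, Tr_sum]
  rw [Finset.sum_eq_single_of_mem (p - 1)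
    (Finset.mem_range.mpr (by omega : p - 1 < p))]
  · simp only [Nat.sub_self, pow_zero, Nat.choose_self, Nat.cast_one, mul_one, one_mul]
    exact h1
  · intro k hk hne
    have hklt : k + 1 < p := by
      have := Finset.mem_range.mp hk
      omega
    have hterm : (X (Fin.last n) * iot κ n g₀) ^ k * iot κ n r₀ ^ (p - 1 - k) *
        ((p - 1).choose k : MvPolynomial (Fin (n+1)) κ) =
        X (Fin.last n) ^ k *
          iot κ n (g₀ ^ k * r₀ ^ (p - 1 - k) * ((p - 1).choose k : MvPolynomial (Fin n) κ)) := by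
      rw [mul_pow, map_mul, map_mul, map_pow, map_pow, map_natCast]
      ring
    rw [hterm]
    refine Tr_eq_zero_of (y := Fin.last n) fun b hb => ?_
    rw [support_ypow_mul_iot k _ b hb]
    exact hklt

/-- Cancellation of `y` in spans of `y`-free elements. -/
lemma spanNoVar_cancel {E : Set (MvPolynomial (Fin (n+1)) κ)}
    (hE : ∀ e ∈ E, NoVar (Fin.last n) e) {t : MvPolynomial (Fin (n+1)) κ}
    (h : X (Fin.last n) * t ∈ Ideal.span E) : t ∈ Ideal.span E := by
  classical
  set E₀ : Set (MvPolynomial (Fin n) κ) := {q | iot κ n q ∈ E} with hE₀def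
  have him : E = (fun q => iot κ n q) '' E₀ := by
    ext e; constructor
    · intro he
      obtain ⟨q, rfl⟩ := exists_iot_of_noVar (hE e he)
      exact ⟨q, he, rfl⟩
    · rintro ⟨q, hq, rfl⟩; exact hq
  set Φ : MvPolynomial (Fin (n+1)) κ ≃+* Polynomial (MvPolynomial (Fin n) κ) :=
    (psi κ n).toRingEquiv with hΦ
  have hbij : Function.Bijective Φ := (psi κ n).bijective
  have hmem : ∀ z : MvPolynomial (Fin (n+1)) κ,
      z ∈ Ideal.span E ↔ Φ z ∈ Ideal.map Φ (Ideal.span E) := by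
    intro z
    conv_lhs => rw [← Ideal.comap_map_of_bijective Φ hbij (I := Ideal.span E)]
    rfl
  have hmap : Ideal.map Φ (Ideal.span E) =
      Ideal.map (Polynomial.C) (Ideal.span E₀) := by
    rw [Ideal.map_span, Ideal.map_span, him, Set.image_image]
    have hfun : (fun q => Φ (iot κ n q)) = fun q : MvPolynomial (Fin n) κ => Polynomial.C q := by
      funext q; exact psi_iot q
    rw [hfun]
  have hXt : Φ (X (Fin.last n) * t) = Polynomial.X * Φ t := by
    show psi κ n _ = Polynomial.X * psi κ n t
    rw [map_mul, psi_X_last]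
  rw [hmem, hmap, hXt, Ideal.mem_map_C_iff] at h
  rw [hmem, hmap, Ideal.mem_map_C_iff]
  intro e
  have := h (e + 1)
  rwa [Polynomial.coeff_X_mul] at this

variable {I : Ideal (MvPolynomial (Fin (n+1)) κ)}

lemma N_le_I : Nyd (Fin.last n) I ≤ I := by
  rw [Nyd, Ideal.span_le]; rintro f ⟨hf, -⟩; exact hf

lemma mem_N {f : MvPolynomial (Fin (n+1)) κ} (hf : f ∈ I) (hnv : NoVar (Fin.last n) f) :
    f ∈ Nyd (Fin.last n) I :=
  Ideal.subset_span ⟨hf, hnv⟩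

lemma N_cancel {t : MvPolynomial (Fin (n+1)) κ}
    (h : X (Fin.last n) * t ∈ Nyd (Fin.last n) I) : t ∈ Nyd (Fin.last n) I :=
  spanNoVar_cancel (fun _ he => he.2) h

lemma C_cancel {t : MvPolynomial (Fin (n+1)) κ}
    (h : X (Fin.last n) * t ∈ Cyd (Fin.last n) I) : t ∈ Cyd (Fin.last n) I := by
  obtain ⟨k, hk⟩ := h
  refine ⟨k + 1, ?_⟩
  rw [pow_succ, mul_assoc]
  exact hk

lemma ypow_mem_C {t : MvPolynomial (Fin (n+1)) κ} {k : ℕ}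
    (h : X (Fin.last n) ^ k * t ∈ Cyd (Fin.last n) I) : t ∈ Cyd (Fin.last n) I := by
  obtain ⟨j, hj⟩ := h
  refine ⟨j + k, ?_⟩
  rw [pow_add, mul_assoc]
  exact hj

lemma inY_mem_inYIdeal {f : MvPolynomial (Fin (n+1)) κ} (hf : f ∈ I) :
    inY (Fin.last n) f ∈ inYIdeal (Fin.last n) I :=
  Ideal.subset_span ⟨f, hf, rfl⟩

lemma inYIdeal_le_C : inYIdeal (Fin.last n) I ≤ Cyd (Fin.last n) I := by
  intro f hf
  exact ⟨0, by rwa [pow_zero, one_mul]⟩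

/-- `lcY f` is the leading coefficient of `f` with respect to the last variable. -/
noncomputable def lcY (f : MvPolynomial (Fin (n+1)) κ) : MvPolynomial (Fin n) κ :=
  (psi κ n f).coeff (degreeOf (Fin.last n) f)

lemma coeff_inY (f : MvPolynomial (Fin (n+1)) κ) (b : Fin (n+1) →₀ ℕ) :
    coeff b (inY (Fin.last n) f) =
      if b (Fin.last n) = degreeOf (Fin.last n) f then coeff b f else 0 := by
  rw [inY, coeff_sum]
  rw [Finset.sum_eq_single b]
  · rw [apply_ite (coeff b), coeff_monomial, if_pos rfl, coeff_zero]
  · intro b' _ hne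
    rw [apply_ite (coeff b), coeff_monomial, if_neg hne, coeff_zero, ite_self]
  · intro hb
    rw [notMem_support_iff.mp hb, apply_ite (coeff b), coeff_zero]
    simp
  
lemma psi_inY (f : MvPolynomial (Fin (n+1)) κ) :
    psi κ n (inY (Fin.last n) f) =
      Polynomial.C (lcY f) * Polynomial.X ^ (degreeOf (Fin.last n) f) := by
  apply Polynomial.ext; intro e
  apply MvPolynomial.ext; intro m
  rw [psi_coeff_coeff, coeff_inY]
  have hBlast : (Finsupp.mapDomain (Equiv.swap (0 : Fin (n+1)) (Fin.last n))
      (Finsupp.cons e m)) (Fin.last n) = e := by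
    have h1 := Finsupp.mapDomain_apply
      (Equiv.injective (Equiv.swap (0 : Fin (n+1)) (Fin.last n))) (Finsupp.cons e m) 0
    rwa [Equiv.swap_apply_left, Finsupp.cons_zero] at h1
  rw [hBlast, Polynomial.coeff_C_mul_X_pow, apply_ite (coeff m)]
  by_cases he : e = degreeOf (Fin.last n) f
  · rw [if_pos he, if_pos he, lcY, psi_coeff_coeff, he]
  · rw [if_neg he, if_neg he, coeff_zero]

lemma inY_eq (f : MvPolynomial (Fin (n+1)) κ) :
    inY (Fin.last n) f =
      X (Fin.last n) ^ (degreeOf (Fin.last n) f) * iot κ n (lcY f) := by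
  apply (psi κ n).injective
  rw [psi_inY, map_mul, map_pow, psi_X_last, psi_iot, mul_comm]

set_option maxHeartbeats 1000000 in
/-- The lifting lemma. -/
lemma liftLemma (c₀ : MvPolynomial (Fin n) κ)
    (h : X (Fin.last n) * iot κ n c₀ ∈ inYIdeal (Fin.last n) I) :
    ∃ s₀ : MvPolynomial (Fin n) κ,
      X (Fin.last n) * iot κ n c₀ + iot κ n s₀ ∈ I := by
  classical
  have hQ : ∀ (z : MvPolynomial (Fin (n+1)) κ), z ∈ inYIdeal (Fin.last n) I →
      ((∃ t ∈ I, (psi κ n t).natDegree ≤ 1 ∧ (psi κ n t).coeff 1 = (psi κ n z).coeff 1) ∧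
        iot κ n ((psi κ n z).coeff 0) ∈ Nyd (Fin.last n) I) := by
    intro z hz
    rw [inYIdeal] at hz
    refine Submodule.span_induction ?_ ?_ ?_ ?_ hz
    · rintro x ⟨f, hf, rfl⟩
      rw [psi_inY]
      constructor
      · by_cases hD : degreeOf (Fin.last n) f = 1
        · refine ⟨f, hf, ?_, ?_⟩
          · rw [natDegree_psi, hD]
          · rw [hD, Polynomial.coeff_C_mul_X_pow, if_pos rfl, lcY, hD]
        · refine ⟨0, Ideal.zero_mem I, ?_, ?_⟩
          · rw [map_zero, Polynomial.natDegree_zero]; exact Nat.zero_le 1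
          · rw [map_zero, Polynomial.coeff_zero,
              Polynomial.coeff_C_mul_X_pow, if_neg (fun hc => hD hc.symm)]
      · by_cases hD : degreeOf (Fin.last n) f = 0
        · rw [hD, pow_zero, mul_one, Polynomial.coeff_C]
          have hnv : NoVar (Fin.last n) f := noVar_iff_degreeOf.mpr hD
          have hfe : iot κ n (lcY f) = f := by
            apply (psi κ n).injective
            rw [psi_iot, lcY, hD]
            exact (Polynomial.eq_C_of_natDegree_eq_zero
              (by rw [natDegree_psi]; exact hD)).symm
          rw [if_pos rfl, hfe]
          exact mem_N hf hnv
        · rw [Polynomial.coeff_C_mul_X_pow, if_neg (fun hc => hD hc.symm), map_zero]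
          exact Ideal.zero_mem _
    · refine ⟨⟨0, Ideal.zero_mem I, ?_, rfl⟩, ?_⟩
      · rw [map_zero, Polynomial.natDegree_zero]; exact Nat.zero_le 1
      · rw [map_zero, Polynomial.coeff_zero, map_zero]; exact Ideal.zero_mem _
    · rintro x₁ x₂ hx₁ hx₂ ⟨⟨t₁, ht₁, hd₁, hc₁⟩, hN₁⟩ ⟨⟨t₂, ht₂, hd₂, hc₂⟩, hN₂⟩
      refine ⟨⟨t₁ + t₂, Ideal.add_mem I ht₁ ht₂, ?_, ?_⟩, ?_⟩
      · rw [map_add]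
        refine le_trans (Polynomial.natDegree_add_le _ _) ?_
        exact max_le hd₁ hd₂
      · rw [map_add, map_add, Polynomial.coeff_add, Polynomial.coeff_add, hc₁, hc₂]
      · rw [map_add, Polynomial.coeff_add, map_add]
        exact Ideal.add_mem _ hN₁ hN₂
    · rintro a x hx ⟨⟨t, ht, hd, hc⟩, hN⟩
      rw [smul_eq_mul]
      have hc1 : (psi κ n (a * x)).coeff 1 =
          (psi κ n a).coeff 0 * (psi κ n x).coeff 1 +
            (psi κ n a).coeff 1 * (psi κ n x).coeff 0 := by
        rw [map_mul, Polynomial.coeff_mul, Finset.Nat.sum_antidiagonal_eq_sum_range_succ_mk]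
        simp [Finset.sum_range_succ]
      have hc0 : (psi κ n (a * x)).coeff 0 =
          (psi κ n a).coeff 0 * (psi κ n x).coeff 0 := by
        rw [map_mul, Polynomial.mul_coeff_zero]
      constructor
      · refine ⟨iot κ n ((psi κ n a).coeff 0) * t +
          X (Fin.last n) * (iot κ n ((psi κ n a).coeff 1) * iot κ n ((psi κ n x).coeff 0)),
          ?_, ?_, ?_⟩
        · exact Ideal.add_mem I (Ideal.mul_mem_left I _ ht)
            (Ideal.mul_mem_left I _ (Ideal.mul_mem_left _ _ (N_le_I hN)))
        · rw [map_add, map_mul, map_mul, map_mul, psi_iot, psi_iot, psi_iot, psi_X_last]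
          refine le_trans (Polynomial.natDegree_add_le _ _) (max_le ?_ ?_)
          · exact le_trans (Polynomial.natDegree_C_mul_le _ _) hd
          · refine le_trans (Polynomial.natDegree_mul_le) ?_
            rw [Polynomial.natDegree_X]
            refine le_trans (Nat.add_le_add_left (Polynomial.natDegree_mul_le) 1) ?_
            simp [Polynomial.natDegree_C]
        · rw [map_add, map_mul, map_mul, map_mul, psi_iot, psi_iot, psi_iot, psi_X_last,
            Polynomial.coeff_add, Polynomial.coeff_C_mul, hc, hc1]
          congr 1
          rw [show Polynomial.X * (Polynomial.C ((psi κ n a).coeff 1) *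
              Polynomial.C ((psi κ n x).coeff 0)) =
              Polynomial.C ((psi κ n a).coeff 1 * (psi κ n x).coeff 0) * Polynomial.X by
            rw [Polynomial.C_mul]; ring]
          rw [Polynomial.coeff_C_mul, Polynomial.coeff_X_one, mul_one]
      · rw [hc0, map_mul]
        exact Ideal.mul_mem_left _ _ hN
  obtain ⟨⟨t, htI, hdeg, hc1⟩, -⟩ := hQ _ h
  have hcoeff1 : (psi κ n (X (Fin.last n) * iot κ n c₀)).coeff 1 = c₀ := by
    rw [map_mul, psi_X_last, psi_iot,
      show Polynomial.X * Polynomial.C c₀ = Polynomial.C c₀ * Polynomial.X from mul_comm _ _,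
      Polynomial.coeff_C_mul, Polynomial.coeff_X_one, mul_one]
  refine ⟨(psi κ n t).coeff 0, ?_⟩
  have ht_eq : t = X (Fin.last n) * iot κ n c₀ + iot κ n ((psi κ n t).coeff 0) := by
    apply (psi κ n).injective
    rw [map_add, map_mul, psi_X_last, psi_iot, psi_iot]
    conv_lhs => rw [Polynomial.eq_X_add_C_of_degree_le_one
      (Polynomial.degree_le_of_natDegree_le hdeg)]
    rw [hc1, hcoeff1]
    ring
  rw [← ht_eq]
  exact htI

lemma C_le_span_noVar :
    Cyd (Fin.last n) I ≤
      Ideal.span {c | c ∈ Cyd (Fin.last n) I ∧ NoVar (Fin.last n) c} := by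
  have hcancel : ∀ (k : ℕ) (t : MvPolynomial (Fin (n+1)) κ),
      X (Fin.last n) ^ k * t ∈
        Ideal.span {c | c ∈ Cyd (Fin.last n) I ∧ NoVar (Fin.last n) c} →
      t ∈ Ideal.span {c | c ∈ Cyd (Fin.last n) I ∧ NoVar (Fin.last n) c} := by
    intro k
    induction k with
    | zero => intro t h; rwa [pow_zero, one_mul] at h
    | succ k ih =>
      intro t h
      have h2 : X (Fin.last n) ^ k * (X (Fin.last n) * t) ∈
          Ideal.span {c | c ∈ Cyd (Fin.last n) I ∧ NoVar (Fin.last n) c} := by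
        rw [← mul_assoc, ← pow_succ]; exact h
      exact spanNoVar_cancel (fun _ he => he.2) (ih _ h2)
  intro t ht
  obtain ⟨k, hk⟩ := ht
  refine hcancel k t ?_
  have hsub : inYIdeal (Fin.last n) I ≤
      Ideal.span {c | c ∈ Cyd (Fin.last n) I ∧ NoVar (Fin.last n) c} := by
    rw [inYIdeal, Ideal.span_le]
    rintro z ⟨f, hf, rfl⟩
    rw [inY_eq]
    refine Ideal.mul_mem_left _ _ (Ideal.subset_span ⟨?_, noVar_iot _⟩)
    refine ypow_mem_C (k := degreeOf (Fin.last n) f) ?_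
    rw [← inY_eq]
    exact inYIdeal_le_C (inY_mem_inYIdeal hf)
  exact hsub hk

lemma nzd {u : MvPolynomial (Fin (n+1)) κ}
    (hup : ∀ P ∈ associatedPrimes (MvPolynomial (Fin (n + 1)) κ)
      (MvPolynomial (Fin (n + 1)) κ ⧸ Nyd (Fin.last n) I), u ∉ P)
    {t : MvPolynomial (Fin (n+1)) κ} (h : u * t ∈ Nyd (Fin.last n) I) :
    t ∈ Nyd (Fin.last n) I := by
  by_contra hns
  have hx : (Ideal.Quotient.mk (Nyd (Fin.last n) I) t) ≠ 0 := by
    rw [Ne, Ideal.Quotient.eq_zero_iff_mem]; exact hns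
  obtain ⟨P, hP, hle⟩ := exists_le_isAssociatedPrime_of_isNoetherianRing
    (MvPolynomial (Fin (n+1)) κ) (Ideal.Quotient.mk (Nyd (Fin.last n) I) t) hx
  refine hup P hP (hle ?_)
  rw [Submodule.mem_colon_singleton, Submodule.mem_bot]
  show u • (Ideal.Quotient.mk (Nyd (Fin.last n) I) t) = 0
  have hsm : u • (Ideal.Quotient.mk (Nyd (Fin.last n) I) t) =
      Ideal.Quotient.mk (Nyd (Fin.last n) I) (u * t) := rfl
  rw [hsm, Ideal.Quotient.eq_zero_iff_mem]
  exact h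

lemma TN {g : MvPolynomial (Fin (n+1)) κ} (hfrob : ∀ c : κ, c ^ p = c)
    (hN : ∀ a ∈ Nyd (Fin.last n) I,
      Tr κ p ((X (Fin.last n) * g) ^ (p - 1) * a) ∈ Nyd (Fin.last n) I)
    (k : ℕ) : ∀ z ∈ Nyd (Fin.last n) I,
      Tr κ p (X (Fin.last n) ^ k * (g ^ (p - 1) * z)) ∈ Nyd (Fin.last n) I := by
  have hcase : ∀ k, p - 1 ≤ k → ∀ z ∈ Nyd (Fin.last n) I,
      Tr κ p (X (Fin.last n) ^ k * (g ^ (p - 1) * z)) ∈ Nyd (Fin.last n) I := by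
    intro k hk z hz
    have h1 : (p - 1) + (k - (p - 1)) = k := by omega
    have hid : X (Fin.last n) ^ k * (g ^ (p - 1) * z) =
        (X (Fin.last n) * g) ^ (p - 1) * (X (Fin.last n) ^ (k - (p - 1)) * z) := by
      calc X (Fin.last n) ^ k * (g ^ (p - 1) * z)
          = (X (Fin.last n) ^ (p - 1) * X (Fin.last n) ^ (k - (p - 1))) *
            (g ^ (p - 1) * z) := by rw [← pow_add, h1]
        _ = (X (Fin.last n) * g) ^ (p - 1) *
            (X (Fin.last n) ^ (k - (p - 1)) * z) := by rw [mul_pow]; ring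
    rw [hid]
    exact hN _ (Ideal.mul_mem_left _ _ hz)
  intro z hz
  by_cases hk : p - 1 ≤ k
  · exact hcase k hk z hz
  · have h2 := hcase (k + p) (by omega) z hz
    have h3 : X (Fin.last n) ^ (k + p) * (g ^ (p - 1) * z) =
        X (Fin.last n) ^ p * (X (Fin.last n) ^ k * (g ^ (p - 1) * z)) := by
      rw [pow_add]; ring
    rw [h3, Tr_pow_mul hfrob] at h2
    exact N_cancel h2

lemma TC {g : MvPolynomial (Fin (n+1)) κ} (hfrob : ∀ c : κ, c ^ p = c)
    (hC : ∀ a ∈ Cyd (Fin.last n) I,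
      Tr κ p ((X (Fin.last n) * g) ^ (p - 1) * a) ∈ Cyd (Fin.last n) I)
    (k : ℕ) : ∀ z ∈ Cyd (Fin.last n) I,
      Tr κ p (X (Fin.last n) ^ k * (g ^ (p - 1) * z)) ∈ Cyd (Fin.last n) I := by
  have hcase : ∀ k, p - 1 ≤ k → ∀ z ∈ Cyd (Fin.last n) I,
      Tr κ p (X (Fin.last n) ^ k * (g ^ (p - 1) * z)) ∈ Cyd (Fin.last n) I := by
    intro k hk z hz
    have h1 : (p - 1) + (k - (p - 1)) = k := by omega
    have hid : X (Fin.last n) ^ k * (g ^ (p - 1) * z) =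
        (X (Fin.last n) * g) ^ (p - 1) * (X (Fin.last n) ^ (k - (p - 1)) * z) := by
      calc X (Fin.last n) ^ k * (g ^ (p - 1) * z)
          = (X (Fin.last n) ^ (p - 1) * X (Fin.last n) ^ (k - (p - 1))) *
            (g ^ (p - 1) * z) := by rw [← pow_add, h1]
        _ = (X (Fin.last n) * g) ^ (p - 1) *
            (X (Fin.last n) ^ (k - (p - 1)) * z) := by rw [mul_pow]; ring
    rw [hid]
    exact hC _ (Ideal.mul_mem_left _ _ hz)
  intro z hz
  by_cases hk : p - 1 ≤ k
  · exact hcase k hk z hz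
  · have h2 := hcase (k + p) (by omega) z hz
    have h3 : X (Fin.last n) ^ (k + p) * (g ^ (p - 1) * z) =
        X (Fin.last n) ^ p * (X (Fin.last n) ^ k * (g ^ (p - 1) * z)) := by
      rw [pow_add]; ring
    rw [h3, Tr_pow_mul hfrob] at h2
    exact C_cancel h2

lemma LN {g : MvPolynomial (Fin (n+1)) κ} (hfrob : ∀ c : κ, c ^ p = c)
    (hN : ∀ a ∈ Nyd (Fin.last n) I,
      Tr κ p ((X (Fin.last n) * g) ^ (p - 1) * a) ∈ Nyd (Fin.last n) I)
    (u₀ s₀ : MvPolynomial (Fin n) κ) :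
    ∀ z ∈ Nyd (Fin.last n) I,
      Tr κ p (g ^ (p - 1) * (X (Fin.last n) * iot κ n u₀ + iot κ n s₀) ^ (p - 1) * z) ∈
        Nyd (Fin.last n) I := by
  intro z hz
  have hp1 : p - 1 + 1 = p := Nat.succ_pred_eq_of_pos (Fact.out : p.Prime).pos
  have hexp : g ^ (p - 1) * (X (Fin.last n) * iot κ n u₀ + iot κ n s₀) ^ (p - 1) * z =
      ∑ k ∈ Finset.range p, X (Fin.last n) ^ k *
        (g ^ (p - 1) * ((iot κ n (u₀ ^ k * s₀ ^ (p - 1 - k)) *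
          ((p - 1).choose k : MvPolynomial (Fin (n+1)) κ)) * z)) := by
    rw [add_pow, hp1, Finset.mul_sum, Finset.sum_mul]
    refine Finset.sum_congr rfl fun k _ => ?_
    rw [mul_pow, map_mul, map_pow, map_pow]
    ring
  rw [hexp, Tr_sum]
  refine Ideal.sum_mem _ fun k _ => ?_
  exact TN hfrob hN k _ (Ideal.mul_mem_left _ _ hz)

set_option maxHeartbeats 1000000 in
lemma descent (hfrob : ∀ c : κ, c ^ p = c)
    (hgvd1 : inYIdeal (Fin.last n) I =
      Cyd (Fin.last n) I ⊓ (Nyd (Fin.last n) I + Ideal.span {X (Fin.last n)}))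
    {g : MvPolynomial (Fin (n+1)) κ}
    (hN : ∀ a ∈ Nyd (Fin.last n) I,
      Tr κ p ((X (Fin.last n) * g) ^ (p - 1) * a) ∈ Nyd (Fin.last n) I)
    (hC : ∀ a ∈ Cyd (Fin.last n) I,
      Tr κ p ((X (Fin.last n) * g) ^ (p - 1) * a) ∈ Cyd (Fin.last n) I)
    (u₀ s₀ : MvPolynomial (Fin n) κ)
    (hFI : X (Fin.last n) * iot κ n u₀ + iot κ n s₀ ∈ I) :
    ∀ D : ℕ, ∀ a ∈ I, degreeOf (Fin.last n) a ≤ D →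
      Tr κ p (g ^ (p - 1) * (X (Fin.last n) * iot κ n u₀ + iot κ n s₀) ^ (p - 1) *
          (iot κ n u₀ * a)) ∈
        Ideal.span {X (Fin.last n) * iot κ n u₀ + iot κ n s₀} * Cyd (Fin.last n) I +
          Nyd (Fin.last n) I := by
  set F : MvPolynomial (Fin (n+1)) κ := X (Fin.last n) * iot κ n u₀ + iot κ n s₀ with hFdef
  have hp1 : p - 1 + 1 = p := Nat.succ_pred_eq_of_pos (Fact.out : p.Prime).pos
  intro D
  induction D with
  | zero =>
    intro a ha hdeg
    have hnv : NoVar (Fin.last n) a := noVar_iff_degreeOf.mpr (Nat.le_zero.mp hdeg)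
    have haN : iot κ n u₀ * a ∈ Nyd (Fin.last n) I :=
      Ideal.mul_mem_left _ _ (mem_N ha hnv)
    exact Submodule.mem_sup_right (LN hfrob hN u₀ s₀ _ haN)
  | succ D ih =>
    intro a ha hdeg
    by_cases hle : degreeOf (Fin.last n) a ≤ D
    · exact ih a ha hle
    · have hdd : degreeOf (Fin.last n) a = D + 1 := by omega
      set ℓ : MvPolynomial (Fin n) κ := lcY a with hℓdef
      have h1 : iot κ n ℓ ∈ Cyd (Fin.last n) I := by
        refine ypow_mem_C (k := degreeOf (Fin.last n) a) ?_
        rw [← inY_eq a]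
        exact inYIdeal_le_C (inY_mem_inYIdeal ha)
      have h2 : X (Fin.last n) * iot κ n ℓ ∈ inYIdeal (Fin.last n) I := by
        rw [hgvd1]
        refine Submodule.mem_inf.mpr ⟨Ideal.mul_mem_left _ _ h1, Submodule.mem_sup_right ?_⟩
        exact Ideal.mem_span_singleton'.mpr ⟨iot κ n ℓ, mul_comm _ _⟩
      obtain ⟨sₐ, hG⟩ := liftLemma ℓ h2
      set G : MvPolynomial (Fin (n+1)) κ := X (Fin.last n) * iot κ n ℓ + iot κ n sₐ with hGdef
      set a' : MvPolynomial (Fin (n+1)) κ := a - X (Fin.last n) ^ D * G with ha'def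
      have ha' : a' ∈ I := Ideal.sub_mem I ha (Ideal.mul_mem_left _ _ hG)
      have hpsi' : psi κ n a' = psi κ n a -
          Polynomial.X ^ D * (Polynomial.X * Polynomial.C ℓ + Polynomial.C sₐ) := by
        rw [ha'def, map_sub, map_mul, map_pow, psi_X_last, hGdef, map_add, map_mul,
          psi_X_last, psi_iot, psi_iot]
      have hdeg' : degreeOf (Fin.last n) a' ≤ D := by
        rw [← natDegree_psi]
        refine Polynomial.natDegree_le_iff_coeff_eq_zero.mpr fun N hN2 => ?_
        rw [hpsi', Polynomial.coeff_sub]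
        have hsum : Polynomial.X ^ D * (Polynomial.X * Polynomial.C ℓ + Polynomial.C sₐ) =
            Polynomial.C ℓ * Polynomial.X ^ (D + 1) + Polynomial.C sₐ * Polynomial.X ^ D := by
          ring
        rw [hsum, Polynomial.coeff_add, Polynomial.coeff_C_mul_X_pow,
          Polynomial.coeff_C_mul_X_pow]
        rcases Nat.lt_or_ge N (D + 2) with h | h
        · have hND : N = D + 1 := by omega
          rw [if_pos hND, if_neg (by omega), add_zero, hND]
          have hℓ2 : ℓ = (psi κ n a).coeff (D + 1) := by
            rw [hℓdef, lcY, hdd]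
          rw [← hℓ2, sub_self]
        · rw [if_neg (by omega), if_neg (by omega), add_zero,
            Polynomial.coeff_eq_zero_of_natDegree_lt, sub_zero]
          rw [natDegree_psi, hdd]
          omega
      have hw : iot κ n (u₀ * sₐ - ℓ * s₀) = iot κ n u₀ * G - iot κ n ℓ * F := by
        rw [map_sub, map_mul, map_mul, hGdef, hFdef]
        ring
      have hwI : iot κ n (u₀ * sₐ - ℓ * s₀) ∈ I := by
        rw [hw]
        exact Ideal.sub_mem I (Ideal.mul_mem_left _ _ hG) (Ideal.mul_mem_left _ _ hFI)
      have hwN : iot κ n (u₀ * sₐ - ℓ * s₀) ∈ Nyd (Fin.last n) I :=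
        mem_N hwI (noVar_iot _)
      have hFp : F ^ (p - 1) * F = F ^ p := by
        rw [← pow_succ, hp1]
      have harg : g ^ (p - 1) * F ^ (p - 1) * (iot κ n u₀ * a) =
          g ^ (p - 1) * F ^ (p - 1) * (iot κ n u₀ * a') +
          (F ^ p * (g ^ (p - 1) * (X (Fin.last n) ^ D * iot κ n ℓ)) +
           g ^ (p - 1) * F ^ (p - 1) *
             (X (Fin.last n) ^ D * iot κ n (u₀ * sₐ - ℓ * s₀))) := by
        rw [hw, ← hFp, ha'def]
        ring
      rw [harg, Tr_add, Tr_add]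
      refine Submodule.add_mem _ (ih a' ha' hdeg') (Submodule.add_mem _ ?_ ?_)
      · rw [Tr_pow_mul hfrob]
        have hTC : Tr κ p (g ^ (p - 1) * (X (Fin.last n) ^ D * iot κ n ℓ)) ∈
            Cyd (Fin.last n) I := by
          have hre : g ^ (p - 1) * (X (Fin.last n) ^ D * iot κ n ℓ) =
              X (Fin.last n) ^ D * (g ^ (p - 1) * iot κ n ℓ) := by ring
          rw [hre]
          exact TC hfrob hC D _ h1
        exact Submodule.mem_sup_left
          (Ideal.mul_mem_mul (Ideal.mem_span_singleton_self F) hTC)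
      · exact Submodule.mem_sup_right
          (LN hfrob hN u₀ s₀ _ (Ideal.mul_mem_left _ _ hwN))

end Structural

end GVDAux
set_option maxHeartbeats 1600000 in
/-- **Main Theorem.** -/
theorem main_theorem {p : ℕ} [Fact p.Prime] {κ : Type*} [Field κ] [CharP κ p] [PerfectRing κ p]
    {n : ℕ} (I : Ideal (MvPolynomial (Fin (n + 1)) κ))
    (g : MvPolynomial (Fin (n + 1)) κ)
    (hgvd : IsNondegGVD (Fin.last n) I)
    (hg : NoVar (Fin.last n) g)
    (hsplit : IsFrobSplitting p
      (fun a => Tr κ p ((X (Fin.last n) * g) ^ (p - 1) * a)))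
    (hC : CompatiblySplits (fun a => Tr κ p ((X (Fin.last n) * g) ^ (p - 1) * a))
      (Cyd (Fin.last n) I))
    (hN : CompatiblySplits (fun a => Tr κ p ((X (Fin.last n) * g) ^ (p - 1) * a))
      (Nyd (Fin.last n) I))
    (hu : ∃ u ∈ Cyd (Fin.last n) I,
      (∀ P ∈ associatedPrimes (MvPolynomial (Fin (n + 1)) κ)
        (MvPolynomial (Fin (n + 1)) κ ⧸ Nyd (Fin.last n) I), u ∉ P) ∧ u ∣ g) :
    ∃ r : MvPolynomial (Fin (n + 1)) κ, NoVar (Fin.last n) r ∧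
      IsFrobSplitting p (fun a => Tr κ p ((X (Fin.last n) * g + r) ^ (p - 1) * a)) ∧
      CompatiblySplits (fun a => Tr κ p ((X (Fin.last n) * g + r) ^ (p - 1) * a)) I := by
  classical
  open GVDAux in
  obtain ⟨u, huC, huP, hudvd⟩ := hu
  have hfrob : ∀ c : κ, c ^ p = c := GVDAux.kFrob hsplit
  have hp1 : p - 1 + 1 = p :=
    Nat.succ_pred_eq_of_pos (Fact.out : p.Prime).pos
  have hp2 : 2 ≤ p := (Fact.out : p.Prime).two_le
  by_cases hg0 : g = 0
  · exfalso
    have h1 := hsplit.2.2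
    simp only [hg0, mul_zero] at h1
    rw [zero_pow (by omega : p - 1 ≠ 0), zero_mul, GVDAux.Tr_zero] at h1
    exact zero_ne_one h1
  obtain ⟨g', hg'⟩ := hudvd
  have hune : u ≠ 0 := fun h => hg0 (by rw [hg', h, zero_mul])
  have hg'ne : g' ≠ 0 := fun h => hg0 (by rw [hg', h, mul_zero])
  -- `u` and `g'` have no `y`
  have hpsine : ∀ f : MvPolynomial (Fin (n+1)) κ, f ≠ 0 → psi κ n f ≠ 0 := by
    intro f hf hc
    exact hf ((psi κ n).injective (by rw [hc, map_zero]))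
  have hdegsum : degreeOf (Fin.last n) u = 0 ∧ degreeOf (Fin.last n) g' = 0 := by
    have h2 : psi κ n g = psi κ n u * psi κ n g' := by rw [hg', map_mul]
    have h3 := Polynomial.natDegree_mul (hpsine u hune) (hpsine g' hg'ne)
    rw [← h2] at h3
    rw [natDegree_psi, natDegree_psi, natDegree_psi] at h3
    have h4 := noVar_iff_degreeOf.mp hg
    omega
  have hunv : NoVar (Fin.last n) u := noVar_iff_degreeOf.mpr hdegsum.1
  have hg'nv : NoVar (Fin.last n) g' := noVar_iff_degreeOf.mpr hdegsum.2
  obtain ⟨u₀, hu₀⟩ := exists_iot_of_noVar hunv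
  obtain ⟨g'₀, hg'₀⟩ := exists_iot_of_noVar hg'nv
  -- lift `u`
  have hyu : X (Fin.last n) * iot κ n u₀ ∈ inYIdeal (Fin.last n) I := by
    rw [hgvd.1.1]
    refine Submodule.mem_inf.mpr ⟨Ideal.mul_mem_left _ _ (hu₀ ▸ huC),
      Submodule.mem_sup_right ?_⟩
    exact Ideal.mem_span_singleton'.mpr ⟨iot κ n u₀, mul_comm _ _⟩
  obtain ⟨s₀, hF⟩ := liftLemma u₀ hyu
  set F : MvPolynomial (Fin (n+1)) κ := X (Fin.last n) * iot κ n u₀ + iot κ n s₀ with hFdef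
  refine ⟨iot κ n (g'₀ * s₀), noVar_iot _, ?_, ?_⟩
  · -- Frobenius splitting
    refine ⟨fun a b => ?_, fun a b => ?_, ?_⟩
    · show Tr κ p (_ * (a + b)) = _
      rw [mul_add, GVDAux.Tr_add]
    · show Tr κ p (_ * (a ^ p * b)) = _
      have h5 : (X (Fin.last n) * g + iot κ n (g'₀ * s₀)) ^ (p - 1) * (a ^ p * b) =
          a ^ p * ((X (Fin.last n) * g + iot κ n (g'₀ * s₀)) ^ (p - 1) * b) := by ring
      rw [h5, Tr_pow_mul hfrob]
    · exact Tr_one_pert hg (noVar_iot _) hsplit.2.2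
  · -- compatibility with I
    intro a ha
    show Tr κ p ((X (Fin.last n) * g + iot κ n (g'₀ * s₀)) ^ (p - 1) * a) ∈ I
    set T : MvPolynomial (Fin (n+1)) κ :=
      Tr κ p ((X (Fin.last n) * g + iot κ n (g'₀ * s₀)) ^ (p - 1) * a) with hTdef
    have hkey : X (Fin.last n) * g + iot κ n (g'₀ * s₀) = iot κ n g'₀ * F := by
      rw [hg', hu₀, hg'₀, map_mul, hFdef]
      ring
    have hgfac : g = iot κ n u₀ * iot κ n g'₀ := by rw [hg', hu₀, hg'₀]
    have hupow : (iot κ n u₀) ^ p = iot κ n u₀ * (iot κ n u₀) ^ (p - 1) := by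
      conv_lhs => rw [← hp1]
      rw [pow_succ]
      ring
    have hmain : iot κ n u₀ * T ∈
        Ideal.span {F} * Cyd (Fin.last n) I + Nyd (Fin.last n) I := by
      have h5 : iot κ n u₀ * T =
          Tr κ p ((iot κ n u₀) ^ p *
            ((X (Fin.last n) * g + iot κ n (g'₀ * s₀)) ^ (p - 1) * a)) := by
        rw [Tr_pow_mul hfrob, hTdef]
      have h6 : (iot κ n u₀) ^ p *
          ((X (Fin.last n) * g + iot κ n (g'₀ * s₀)) ^ (p - 1) * a) =
          g ^ (p - 1) * F ^ (p - 1) * (iot κ n u₀ * a) := by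
        rw [hkey, hgfac, mul_pow, mul_pow, hupow]
        ring
      rw [h5, h6]
      exact descent hfrob hgvd.1.1 hN hC u₀ s₀ hF (degreeOf (Fin.last n) a) a ha le_rfl
    rw [Submodule.add_eq_sup] at hmain
    obtain ⟨z1, hz1, z2, hz2, heq⟩ := Submodule.mem_sup.mp hmain
    obtain ⟨γ, hγ, hγeq⟩ := Ideal.mem_span_singleton_mul.mp hz1
    have hγ' := C_le_span_noVar hγ
    have hFC : ∀ γ' ∈ Ideal.span {c | c ∈ Cyd (Fin.last n) I ∧ NoVar (Fin.last n) c},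
        F * γ' ∈ Ideal.span {iot κ n u₀} * I + Nyd (Fin.last n) I := by
      intro γ' hγ'mem
      refine Submodule.span_induction ?_ ?_ ?_ ?_ hγ'mem
      · rintro c ⟨hcC, hcNV⟩
        obtain ⟨c₀, rfl⟩ := exists_iot_of_noVar hcNV
        have hyc : X (Fin.last n) * iot κ n c₀ ∈ inYIdeal (Fin.last n) I := by
          rw [hgvd.1.1]
          refine Submodule.mem_inf.mpr ⟨Ideal.mul_mem_left _ _ hcC,
            Submodule.mem_sup_right ?_⟩
          exact Ideal.mem_span_singleton'.mpr ⟨iot κ n c₀, mul_comm _ _⟩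
        obtain ⟨sc, hΓ⟩ := liftLemma c₀ hyc
        have hw : F * iot κ n c₀ =
            iot κ n u₀ * (X (Fin.last n) * iot κ n c₀ + iot κ n sc) -
              iot κ n (u₀ * sc - c₀ * s₀) := by
          rw [map_sub, map_mul, map_mul, hFdef]
          ring
        rw [hw, Submodule.add_eq_sup]
        refine Submodule.sub_mem _ ?_ ?_
        · exact Submodule.mem_sup_left
            (Ideal.mul_mem_mul (Ideal.mem_span_singleton_self _) hΓ)
        · refine Submodule.mem_sup_right (mem_N ?_ (noVar_iot _))
          have hw2 : iot κ n (u₀ * sc - c₀ * s₀) =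
              iot κ n u₀ * (X (Fin.last n) * iot κ n c₀ + iot κ n sc) -
                iot κ n c₀ * F := by
            rw [map_sub, map_mul, map_mul, hFdef]
            ring
          rw [hw2]
          exact Ideal.sub_mem I (Ideal.mul_mem_left _ _ hΓ) (Ideal.mul_mem_left _ _ hF)
      · rw [mul_zero]; exact Ideal.zero_mem _
      · intro x₁ x₂ hx₁ hx₂ h₁ h₂
        rw [mul_add]; exact Ideal.add_mem _ h₁ h₂
      · intro b x hx h₁
        rw [smul_eq_mul, mul_left_comm]
        exact Ideal.mul_mem_left _ _ h₁
    have h7 := hFC γ hγ'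
    rw [Submodule.add_eq_sup] at h7
    obtain ⟨w1, hw1, w2, hw2, heq2⟩ := Submodule.mem_sup.mp h7
    obtain ⟨θ, hθ, hθeq⟩ := Ideal.mem_span_singleton_mul.mp hw1
    have h8 : u * (T - θ) ∈ Nyd (Fin.last n) I := by
      have h9 : iot κ n u₀ * (T - θ) = z2 + w2 := by
        linear_combination - heq - hθeq - heq2 - hγeq
      rw [hu₀, h9]
      exact Ideal.add_mem _ hz2 hw2
    have h10 := nzd huP h8
    have h11 : T - θ ∈ I := N_le_I h10
    have h12 := Ideal.add_mem I h11 hθ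
    rwa [sub_add_cancel] at h12
end

section
/- Let I be an ideal of S such that in_{x_n}(I) = C(x_n,I) ∩ (N(x_n,I) + (x_n)) is a nondegenerate geometric vertex decomposition, and suppose N(x_n,I) has no embedded primes. Then there exist q ∈ C(x_n,I) and r ∈ S, with no term of q or r divisible by x_n, such that x_n·q + r ∈ I and both q and x_n·q + r are nonzerodivisors modulo N(x_n,I). -/
open MvPolynomial

namespace GVD1

open Polynomial

variable {κ : Type*} [Field κ] {n : ℕ}

noncomputable def sw (n : ℕ) : Fin (n + 1) ≃ Fin (n + 1) := Equiv.swap (Fin.last n) 0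

noncomputable def pe (κ : Type*) [Field κ] (n : ℕ) :
    MvPolynomial (Fin (n + 1)) κ ≃+* Polynomial (MvPolynomial (Fin n) κ) :=
  ((MvPolynomial.renameEquiv κ (sw n)).trans (MvPolynomial.finSuccEquiv κ n)).toRingEquiv

lemma pe_apply (f : MvPolynomial (Fin (n + 1)) κ) :
    pe κ n f = MvPolynomial.finSuccEquiv κ n (rename (sw n) f) := rfl

lemma sw_last : sw n (Fin.last n) = 0 := Equiv.swap_apply_left _ _

lemma sw_zero : sw n 0 = Fin.last n := Equiv.swap_apply_right _ _

lemma pe_X : pe κ n (X (Fin.last n)) = Polynomial.X := by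
  rw [pe_apply, rename_X, sw_last, finSuccEquiv_X_zero]

lemma pe_symm_X : (pe κ n).symm Polynomial.X = X (Fin.last n) := by
  rw [← pe_X, RingEquiv.symm_apply_apply]

noncomputable def Ex (n : ℕ) (k : ℕ) (m : Fin n →₀ ℕ) : Fin (n + 1) →₀ ℕ :=
  Finsupp.mapDomain (sw n) (Finsupp.cons k m)

lemma sw_sw (b : Fin (n + 1) →₀ ℕ) :
    Finsupp.mapDomain (sw n) (Finsupp.mapDomain (sw n) b) = b := by
  rw [← Finsupp.mapDomain_comp]
  have h : (sw n) ∘ (sw n) = id := by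
    funext i; exact Equiv.swap_apply_self _ _ i
  rw [h, Finsupp.mapDomain_id]

lemma Ex_last (k : ℕ) (m : Fin n →₀ ℕ) : Ex n k m (Fin.last n) = k := by
  have h := Finsupp.mapDomain_apply (Equiv.injective (sw n)) (Finsupp.cons k m) 0
  rw [sw_zero] at h
  rw [Ex, h, Finsupp.cons_zero]

lemma pe_coeff (f : MvPolynomial (Fin (n + 1)) κ) (k : ℕ) (m : Fin n →₀ ℕ) :
    MvPolynomial.coeff m ((pe κ n f).coeff k) = MvPolynomial.coeff (Ex n k m) f := by
  rw [pe_apply, finSuccEquiv_coeff_coeff]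
  have h : Finsupp.mapDomain (sw n) (Ex n k m) = m.cons k := sw_sw _
  rw [← h]
  exact coeff_rename_mapDomain _ (Equiv.injective _) f _

lemma pe_coeff' (f : MvPolynomial (Fin (n + 1)) κ) (b : Fin (n + 1) →₀ ℕ) :
    MvPolynomial.coeff b f =
      MvPolynomial.coeff (Finsupp.tail (Finsupp.mapDomain (sw n) b))
        ((pe κ n f).coeff (b (Fin.last n))) := by
  rw [pe_coeff]
  congr 1
  have h0 : Finsupp.mapDomain (sw n) b 0 = b (Fin.last n) := by
    have h0' := Finsupp.mapDomain_apply (Equiv.injective (sw n)) b (Fin.last n)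
    rw [sw_last] at h0'
    exact h0'
  rw [Ex, ← h0, Finsupp.cons_tail, sw_sw]

lemma noVar_iff {f : MvPolynomial (Fin (n + 1)) κ} :
    NoVar (Fin.last n) f ↔ ∃ c, pe κ n f = Polynomial.C c := by
  constructor
  · intro h
    refine ⟨(pe κ n f).coeff 0, ?_⟩
    apply Polynomial.ext
    intro k
    rw [Polynomial.coeff_C]
    split_ifs with hk
    · rw [hk]
    · apply MvPolynomial.ext
      intro m
      rw [pe_coeff, MvPolynomial.coeff_zero]
      by_contra hne
      have hm := MvPolynomial.mem_support_iff.mpr hne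
      exact hk ((Ex_last k m) ▸ h _ hm)
  · rintro ⟨c, hc⟩ b hb
    by_contra hbl
    rw [MvPolynomial.mem_support_iff] at hb
    apply hb
    rw [pe_coeff' f b, hc, Polynomial.coeff_C, if_neg hbl, MvPolynomial.coeff_zero]

lemma degreeOf_pe (f : MvPolynomial (Fin (n + 1)) κ) :
    MvPolynomial.degreeOf (Fin.last n) f = (pe κ n f).natDegree := by
  rw [pe_apply, natDegree_finSuccEquiv]
  have h := MvPolynomial.degreeOf_rename_of_injective (Equiv.injective (sw n)) (p := f)
    (Fin.last n)
  rw [sw_last] at h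
  exact h.symm

lemma coeff_inY {σ : Type*} [DecidableEq σ] (y : σ) (f : MvPolynomial σ κ) (b : σ →₀ ℕ) :
    (inY y f).coeff b = if b y = f.degreeOf y then f.coeff b else 0 := by
  classical
  rw [inY, MvPolynomial.coeff_sum]
  have h : ∀ c ∈ f.support,
      MvPolynomial.coeff b (if (c : σ →₀ ℕ) y = f.degreeOf y then monomial c (f.coeff c) else 0)
        = if c = b then (if b y = f.degreeOf y then f.coeff b else 0) else 0 := by
    intro c _
    by_cases hcb : c = b
    · subst hcb
      rw [apply_ite (MvPolynomial.coeff c), MvPolynomial.coeff_monomial, if_pos rfl,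
        MvPolynomial.coeff_zero]
      simp
    · rw [apply_ite (MvPolynomial.coeff b), MvPolynomial.coeff_monomial, if_neg hcb,
        MvPolynomial.coeff_zero, ite_self, if_neg hcb]
  rw [Finset.sum_congr rfl h, Finset.sum_ite_eq' f.support b
    (fun _ => if b y = f.degreeOf y then f.coeff b else 0)]
  split_ifs with h1 h2 h2
  · rfl
  · rfl
  · rw [MvPolynomial.notMem_support_iff.mp h1]
  · rfl

lemma pe_inY (f : MvPolynomial (Fin (n + 1)) κ) :
    pe κ n (inY (Fin.last n) f)
      = Polynomial.C ((pe κ n f).coeff (pe κ n f).natDegree)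
          * Polynomial.X ^ (pe κ n f).natDegree := by
  apply Polynomial.ext
  intro k
  by_cases hk : k = (pe κ n f).natDegree
  · subst hk
    rw [Polynomial.coeff_C_mul, Polynomial.coeff_X_pow, if_pos rfl, mul_one]
    apply MvPolynomial.ext
    intro m
    rw [pe_coeff, coeff_inY, Ex_last, degreeOf_pe, if_pos rfl, pe_coeff]
  · rw [Polynomial.coeff_C_mul, Polynomial.coeff_X_pow, if_neg hk, mul_zero]
    apply MvPolynomial.ext
    intro m
    rw [pe_coeff, coeff_inY, Ex_last, degreeOf_pe, if_neg hk, MvPolynomial.coeff_zero]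

lemma inY_eq_of_noVar {f : MvPolynomial (Fin (n + 1)) κ} (h : NoVar (Fin.last n) f) :
    inY (Fin.last n) f = f := by
  apply (pe κ n).injective
  obtain ⟨c, hc⟩ := noVar_iff.mp h
  rw [pe_inY, hc]
  simp


def coeffsIn (A : Type*) [CommRing A] (T : Ideal A) : Ideal (Polynomial A) where
  carrier := {v | ∀ k, v.coeff k ∈ T}
  zero_mem' := fun k => by simp
  add_mem' := by
    intro a b ha hb k
    rw [Polynomial.coeff_add]
    exact T.add_mem (ha k) (hb k)
  smul_mem' := by
    intro c v hv k
    rw [smul_eq_mul, Polynomial.coeff_mul]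
    exact T.sum_mem fun x _ => T.mul_mem_left _ (hv x.2)

lemma mem_coeffsIn {A : Type*} [CommRing A] {T : Ideal A} {v : Polynomial A} :
    v ∈ coeffsIn A T ↔ ∀ k, v.coeff k ∈ T := Iff.rfl

def lowCoeffsIn {A : Type*} [CommRing A] (T : Ideal A) (d : ℕ) : Ideal (Polynomial A) where
  carrier := {v | ∀ k ≤ d, v.coeff k ∈ T}
  zero_mem' := fun k _ => by simp
  add_mem' := by
    intro a b ha hb k hk
    rw [Polynomial.coeff_add]
    exact T.add_mem (ha k hk) (hb k hk)
  smul_mem' := by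
    intro c v hv k hk
    rw [smul_eq_mul, Polynomial.coeff_mul]
    refine T.sum_mem fun x hx => T.mul_mem_left _ (hv x.2 ?_)
    have := Finset.HasAntidiagonal.mem_antidiagonal.mp hx
    omega

lemma mem_lowCoeffsIn {A : Type*} [CommRing A] {T : Ideal A} {d : ℕ} {v : Polynomial A} :
    v ∈ lowCoeffsIn T d ↔ ∀ k ≤ d, v.coeff k ∈ T := Iff.rfl

lemma mem_of_coeffsC {A : Type*} [CommRing A] {T : Ideal (Polynomial A)} {v : Polynomial A}
    (h : ∀ k, Polynomial.C (v.coeff k) ∈ T) : v ∈ T := by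
  have hv := Polynomial.sum_C_mul_X_pow_eq v
  rw [← hv, Polynomial.sum_def]
  exact T.sum_mem fun k _ => T.mul_mem_right _ (h k)

noncomputable def Gb (I : Ideal (MvPolynomial (Fin (n + 1)) κ)) :
    Ideal (MvPolynomial (Fin n) κ) where
  carrier := {b | ∃ r, NoVar (Fin.last n) r ∧
    X (Fin.last n) * (pe κ n).symm (Polynomial.C b) + r ∈ I}
  zero_mem' := by
    refine ⟨0, fun b hb => by simp at hb, ?_⟩
    simp
  add_mem' := by
    rintro a b ⟨ra, hra, ha⟩ ⟨rb, hrb, hb⟩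
    refine ⟨ra + rb, ?_, ?_⟩
    · obtain ⟨ca, hca⟩ := noVar_iff.mp hra
      obtain ⟨cb, hcb⟩ := noVar_iff.mp hrb
      exact noVar_iff.mpr ⟨ca + cb, by rw [map_add, hca, hcb, map_add]⟩
    · have h : X (Fin.last n) * (pe κ n).symm (Polynomial.C (a + b)) + (ra + rb)
          = (X (Fin.last n) * (pe κ n).symm (Polynomial.C a) + ra)
            + (X (Fin.last n) * (pe κ n).symm (Polynomial.C b) + rb) := by
        rw [map_add, map_add]; ring
      rw [h]; exact I.add_mem ha hb
  smul_mem' := by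
    rintro c b ⟨r, hr, hmem⟩
    refine ⟨(pe κ n).symm (Polynomial.C c) * r, ?_, ?_⟩
    · obtain ⟨cr, hcr⟩ := noVar_iff.mp hr
      exact noVar_iff.mpr ⟨c * cr,
        by rw [map_mul, RingEquiv.apply_symm_apply, hcr, map_mul]⟩
    · have h : X (Fin.last n) * (pe κ n).symm (Polynomial.C (c • b))
            + (pe κ n).symm (Polynomial.C c) * r
          = (pe κ n).symm (Polynomial.C c)
            * (X (Fin.last n) * (pe κ n).symm (Polynomial.C b) + r) := by
        rw [smul_eq_mul, map_mul, map_mul]; ring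
      rw [h]; exact I.mul_mem_left _ hmem

lemma mem_Gb {I : Ideal (MvPolynomial (Fin (n + 1)) κ)} {b : MvPolynomial (Fin n) κ} :
    b ∈ Gb I ↔ ∃ r, NoVar (Fin.last n) r ∧
      X (Fin.last n) * (pe κ n).symm (Polynomial.C b) + r ∈ I := Iff.rfl

end GVD1

set_option maxHeartbeats 1000000 in
/-- Part (1) of the key proposition: existence of `q ∈ C(x_n,I)` and `r` with
`x_n·q + r ∈ I`, no term of `q` or `r` divisible by `x_n`, and both `q` and
`x_n·q + r` nonzerodivisors modulo `N(x_n,I)`. -/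
theorem gvd_part1 {p : ℕ} [Fact p.Prime] {κ : Type*} [Field κ] [CharP κ p] [PerfectRing κ p]
    {n : ℕ} (I : Ideal (MvPolynomial (Fin (n + 1)) κ))
    (hgvd : IsNondegGVD (Fin.last n) I)
    (hemb : NoEmbeddedPrimes (Nyd (Fin.last n) I)) :
    ∃ q ∈ Cyd (Fin.last n) I, ∃ r : MvPolynomial (Fin (n + 1)) κ,
      NoVar (Fin.last n) q ∧ NoVar (Fin.last n) r ∧
      X (Fin.last n) * q + r ∈ I ∧
      NZDMod (Nyd (Fin.last n) I) q ∧
      NZDMod (Nyd (Fin.last n) I) (X (Fin.last n) * q + r) := by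
  classical
  obtain ⟨⟨hdecomp, halt⟩, hCtop, hrad⟩ := hgvd
  set N := Nyd (Fin.last n) I with hNdef
  set Cy := Cyd (Fin.last n) I with hCydef
  have hNspan : N = Ideal.span {f | f ∈ I ∧ NoVar (Fin.last n) f} := rfl
  have hmemCy : ∀ f, f ∈ Cy ↔
      ∃ k : ℕ, X (Fin.last n) ^ k * f ∈ inYIdeal (Fin.last n) I := fun f => Iff.rfl
  -- translated ideals
  set I' := Ideal.comap (GVD1.pe κ n).symm I with hI'def
  set In' := Ideal.comap (GVD1.pe κ n).symm (inYIdeal (Fin.last n) I) with hIn'def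
  set Lb := Ideal.span {b : MvPolynomial (Fin n) κ |
    ∃ h ∈ I', b = h.leadingCoeff} with hLbdef
  set cmap : MvPolynomial (Fin n) κ →+* MvPolynomial (Fin (n + 1)) κ :=
    ((GVD1.pe κ n).symm : Polynomial (MvPolynomial (Fin n) κ) →+*
      MvPolynomial (Fin (n + 1)) κ).comp (Polynomial.C) with hcmapdef
  have hcmap : ∀ b, cmap b = (GVD1.pe κ n).symm (Polynomial.C b) := fun _ => rfl
  -- the in_y ideal, transported
  have hIn' : In' = Ideal.span {g | ∃ h ∈ I',
      g = Polynomial.C h.leadingCoeff * Polynomial.X ^ h.natDegree} := by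
    rw [hIn'def, Ideal.comap_symm, inYIdeal, Ideal.map_span]
    congr 1
    ext g
    constructor
    · rintro ⟨x, ⟨f, hf, rfl⟩, rfl⟩
      refine ⟨GVD1.pe κ n f, ?_, ?_⟩
      · rw [hI'def, Ideal.mem_comap, RingEquiv.symm_apply_apply]; exact hf
      · rw [GVD1.pe_inY]; rfl
    · rintro ⟨h, hh, rfl⟩
      refine ⟨inY (Fin.last n) ((GVD1.pe κ n).symm h),
        ⟨(GVD1.pe κ n).symm h, hh, rfl⟩, ?_⟩
      rw [GVD1.pe_inY, RingEquiv.apply_symm_apply]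
      rfl
  -- N ≤ Cy
  have hN_le_C : N ≤ Cy := by
    rw [hNspan]
    apply Ideal.span_le.mpr
    rintro f ⟨hfI, hfNV⟩
    rw [SetLike.mem_coe, hmemCy]
    refine ⟨0, ?_⟩
    rw [pow_zero, one_mul]
    exact Ideal.subset_span ⟨f, hfI, (GVD1.inY_eq_of_noVar hfNV).symm⟩
  -- coefficients of In' lie in Lb
  have hIn_coeffs : In' ≤ GVD1.coeffsIn (MvPolynomial (Fin n) κ) Lb := by
    rw [hIn']
    apply Ideal.span_le.mpr
    rintro g ⟨h, hh, rfl⟩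
    rw [SetLike.mem_coe, GVD1.mem_coeffsIn]
    intro k
    rw [Polynomial.coeff_C_mul, Polynomial.coeff_X_pow]
    split_ifs with hkd
    · rw [mul_one]; exact Ideal.subset_span ⟨h, hh, rfl⟩
    · rw [mul_zero]; exact Lb.zero_mem
  -- low coefficients of In' lie in Gb
  have hIn_low : In' ≤ GVD1.lowCoeffsIn (GVD1.Gb I) 1 := by
    rw [hIn']
    apply Ideal.span_le.mpr
    rintro g ⟨h, hh, rfl⟩
    rw [SetLike.mem_coe, GVD1.mem_lowCoeffsIn]
    intro k hk
    rw [Polynomial.coeff_C_mul, Polynomial.coeff_X_pow]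
    split_ifs with hkd
    · rw [mul_one]
      have hd1 : h.natDegree ≤ 1 := by omega
      rw [GVD1.mem_Gb]
      rcases Nat.le_one_iff_eq_zero_or_eq_one.mp hd1 with h0 | h1
      · refine ⟨0, fun b hb => by simp at hb, ?_⟩
        rw [add_zero]
        have heq : (GVD1.pe κ n).symm (Polynomial.C h.leadingCoeff)
            = (GVD1.pe κ n).symm h := by
          rw [Polynomial.leadingCoeff, h0, ← Polynomial.eq_C_of_natDegree_eq_zero h0]
        rw [heq]
        exact I.mul_mem_left _ (Ideal.mem_comap.mp hh)
      · have hX : h = Polynomial.C (h.coeff 1) * Polynomial.X + Polynomial.C (h.coeff 0) :=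
          Polynomial.eq_X_add_C_of_natDegree_le_one hd1
        refine ⟨(GVD1.pe κ n).symm (Polynomial.C (h.coeff 0)),
          GVD1.noVar_iff.mpr ⟨_, RingEquiv.apply_symm_apply _ _⟩, ?_⟩
        have heq : X (Fin.last n) * (GVD1.pe κ n).symm (Polynomial.C h.leadingCoeff)
              + (GVD1.pe κ n).symm (Polynomial.C (h.coeff 0))
            = (GVD1.pe κ n).symm h := by
          conv_rhs => rw [hX]
          rw [Polynomial.leadingCoeff, h1, map_add, map_mul, GVD1.pe_symm_X]
          ring
        rw [heq]
        exact Ideal.mem_comap.mp hh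
    · rw [mul_zero]; exact (GVD1.Gb I).zero_mem
  -- Lb elements give elements of Cy
  have hLb_C : ∀ b ∈ Lb, (GVD1.pe κ n).symm (Polynomial.C b) ∈ Cy := by
    have hle : Lb ≤ Ideal.comap cmap Cy := by
      rw [hLbdef]
      apply Ideal.span_le.mpr
      rintro b ⟨h, hh, rfl⟩
      rw [SetLike.mem_coe, Ideal.mem_comap, hcmap, hmemCy]
      refine ⟨h.natDegree, ?_⟩
      have heq : X (Fin.last n) ^ h.natDegree
            * (GVD1.pe κ n).symm (Polynomial.C h.leadingCoeff)
          = (GVD1.pe κ n).symm (Polynomial.C h.leadingCoeff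
              * Polynomial.X ^ h.natDegree) := by
        rw [map_mul, map_pow, GVD1.pe_symm_X]; ring
      rw [heq]
      have hmem : Polynomial.C h.leadingCoeff * Polynomial.X ^ h.natDegree ∈ In' := by
        rw [hIn']; exact Ideal.subset_span ⟨h, hh, rfl⟩
      exact Ideal.mem_comap.mp hmem
    intro b hb
    have := hle hb
    rwa [Ideal.mem_comap, hcmap] at this
  -- coefficients of elements of Cy lie in Lb
  have hC_coeffs : ∀ u ∈ Cy, ∀ m, (GVD1.pe κ n u).coeff m ∈ Lb := by
    intro u hu m
    obtain ⟨k, hk⟩ := (hmemCy u).mp hu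
    have h1 : Polynomial.X ^ k * GVD1.pe κ n u ∈ In' := by
      rw [hIn'def, Ideal.mem_comap]
      have heq : (GVD1.pe κ n).symm (Polynomial.X ^ k * GVD1.pe κ n u)
          = X (Fin.last n) ^ k * u := by
        rw [map_mul, map_pow, GVD1.pe_symm_X, RingEquiv.symm_apply_apply]
      rwa [heq]
    have h2 := GVD1.mem_coeffsIn.mp (hIn_coeffs h1) (m + k)
    rwa [Polynomial.coeff_X_pow_mul] at h2
  -- constants of Cy lie in Gb (uses the GVD equation)
  have hGb_of_C : ∀ b : MvPolynomial (Fin n) κ,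
      (GVD1.pe κ n).symm (Polynomial.C b) ∈ Cy → b ∈ GVD1.Gb I := by
    intro b hb
    have h1 : X (Fin.last n) * (GVD1.pe κ n).symm (Polynomial.C b)
        ∈ inYIdeal (Fin.last n) I := by
      rw [hdecomp, Ideal.mem_inf]
      constructor
      · exact Cy.mul_mem_left _ hb
      · exact Submodule.mem_sup_right
          (Ideal.mul_mem_right _ _ (Ideal.subset_span (Set.mem_singleton _)))
    have h2 : Polynomial.X * Polynomial.C b ∈ In' := by
      rw [hIn'def, Ideal.mem_comap]
      have heq : (GVD1.pe κ n).symm (Polynomial.X * Polynomial.C b)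
          = X (Fin.last n) * (GVD1.pe κ n).symm (Polynomial.C b) := by
        rw [map_mul, GVD1.pe_symm_X]
      rwa [heq]
    have h3 := GVD1.mem_lowCoeffsIn.mp (hIn_low h2) 1 le_rfl
    have h4 : (Polynomial.X * Polynomial.C b).coeff 1 = b := by
      simpa using Polynomial.coeff_X_mul (Polynomial.C b) 0
    rwa [h4] at h3
  -- finiteness of minimal primes
  haveI : IsNoetherianRing (MvPolynomial (Fin (n + 1)) κ ⧸ N) :=
    isNoetherianRing_of_surjective _ _ (Ideal.Quotient.mk N) Ideal.Quotient.mk_surjective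
  have hfinq : (N.minimalPrimes).Finite := by
    rw [Ideal.minimalPrimes_eq_comap]
    exact (minimalPrimes.finite_of_isNoetherianRing _).image _
  -- Cy is not contained in any minimal prime of N
  have hCnotle : ∀ 𝔭 ∈ N.minimalPrimes, ¬ Cy ≤ 𝔭 := by
    intro 𝔭 h𝔭 hle
    have hPmin : 𝔭 ∈ Cy.minimalPrimes := by
      refine ⟨⟨h𝔭.1.1, hle⟩, ?_⟩
      intro Q hQ hQle
      exact h𝔭.2 ⟨hQ.1, le_trans hN_le_C hQ.2⟩ hQle
    rcases halt with h | h
    · exact hrad h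
    · exact h 𝔭 hPmin h𝔭
  -- Gb is not contained in the pullback of any minimal prime of N
  have hGbnotle : ∀ 𝔭 ∈ N.minimalPrimes, ¬ GVD1.Gb I ≤ Ideal.comap cmap 𝔭 := by
    intro 𝔭 h𝔭 hle
    obtain ⟨u, huC, hu𝔭⟩ := SetLike.not_le_iff_exists.mp (hCnotle 𝔭 h𝔭)
    by_cases hall : ∀ m, (GVD1.pe κ n u).coeff m ∈ Ideal.comap cmap 𝔭
    · apply hu𝔭
      have hmem : GVD1.pe κ n u ∈ Ideal.comap (GVD1.pe κ n).symm 𝔭 := by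
        apply GVD1.mem_of_coeffsC
        intro k
        have := hall k
        rwa [Ideal.mem_comap, hcmap, ← Ideal.mem_comap] at this
      rwa [Ideal.mem_comap, RingEquiv.symm_apply_apply] at hmem
    · push_neg at hall
      obtain ⟨m, hm⟩ := hall
      exact hm (hle (hGb_of_C _ (hLb_C _ (hC_coeffs u huC m))))
  -- prime avoidance
  have hfin2 : ((fun 𝔭 => Ideal.comap cmap 𝔭) '' N.minimalPrimes).Finite := hfinq.image _
  have hsprime : ∀ J ∈ hfin2.toFinset, J.IsPrime := by
    intro J hJ
    rw [Set.Finite.mem_toFinset] at hJ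
    obtain ⟨𝔭, h𝔭, rfl⟩ := hJ
    haveI := h𝔭.1.1
    exact Ideal.IsPrime.comap cmap
  have havoid := Ideal.subset_union_prime (s := hfin2.toFinset)
    (f := id) ⊥ ⊥ (fun J hJ _ _ => hsprime J hJ) (I := GVD1.Gb I)
  have hnot : ¬ ∃ J ∈ hfin2.toFinset, GVD1.Gb I ≤ id J := by
    rintro ⟨J, hJs, hleJ⟩
    rw [Set.Finite.mem_toFinset] at hJs
    obtain ⟨𝔭, h𝔭, rfl⟩ := hJs
    exact hGbnotle 𝔭 h𝔭 hleJ
  obtain ⟨q0, hq0G, hq0n⟩ := Set.not_subset.mp (mt havoid.mp hnot)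
  have hq0avoid : ∀ 𝔭 ∈ N.minimalPrimes, q0 ∉ Ideal.comap cmap 𝔭 := by
    intro 𝔭 h𝔭 hmem
    apply hq0n
    refine Set.mem_biUnion ?_ hmem
    rw [Finset.mem_coe, Set.Finite.mem_toFinset]
    exact ⟨𝔭, h𝔭, rfl⟩
  -- the witnesses
  obtain ⟨r, hrNV, hmemI⟩ := GVD1.mem_Gb.mp hq0G
  set q : MvPolynomial (Fin (n + 1)) κ := (GVD1.pe κ n).symm (Polynomial.C q0) with hqdef
  have hqNV : NoVar (Fin.last n) q :=
    GVD1.noVar_iff.mpr ⟨q0, RingEquiv.apply_symm_apply _ _⟩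
  -- q is not in any minimal prime of N
  have hqavoid : ∀ 𝔭 ∈ N.minimalPrimes, q ∉ 𝔭 := by
    intro 𝔭 h𝔭 hq
    exact hq0avoid 𝔭 h𝔭 (by rwa [Ideal.mem_comap, hcmap])
  -- q ∈ Cy
  have hqC : q ∈ Cy := by
    by_cases hq00 : q0 = 0
    · rw [hqdef, hq00]
      simpa using Cy.zero_mem
    obtain ⟨cr, hcr⟩ := GVD1.noVar_iff.mp hrNV
    have hef : GVD1.pe κ n (X (Fin.last n) * q + r)
        = Polynomial.C q0 * Polynomial.X + Polynomial.C cr := by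
      rw [map_add, map_mul, GVD1.pe_X, RingEquiv.apply_symm_apply, hcr]; ring
    have hd : (GVD1.pe κ n (X (Fin.last n) * q + r)).natDegree = 1 := by
      rw [hef]; exact Polynomial.natDegree_linear hq00
    have hl : (GVD1.pe κ n (X (Fin.last n) * q + r)).coeff 1 = q0 := by
      rw [hef]; simp
    rw [hmemCy]
    refine ⟨1, ?_⟩
    have heq : X (Fin.last n) ^ 1 * q
        = (GVD1.pe κ n).symm
          (Polynomial.C ((GVD1.pe κ n (X (Fin.last n) * q + r)).leadingCoeff)
            * Polynomial.X ^ (GVD1.pe κ n (X (Fin.last n) * q + r)).natDegree) := by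
      rw [Polynomial.leadingCoeff, hd, hl, pow_one, map_mul, map_pow, GVD1.pe_symm_X,
        pow_one, hqdef]
      ring
    rw [heq]
    have hmem : Polynomial.C ((GVD1.pe κ n (X (Fin.last n) * q + r)).leadingCoeff)
        * Polynomial.X ^ (GVD1.pe κ n (X (Fin.last n) * q + r)).natDegree ∈ In' := by
      rw [hIn']
      refine Ideal.subset_span ⟨GVD1.pe κ n (X (Fin.last n) * q + r), ?_, rfl⟩
      rw [hI'def, Ideal.mem_comap, RingEquiv.symm_apply_apply]
      exact hmemI
    exact Ideal.mem_comap.mp hmem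
  -- q is a nonzerodivisor mod N
  have hNZDq : NZDMod N q := by
    intro a ha
    by_contra hna
    have h0 : Ideal.Quotient.mk N a ≠ 0 :=
      fun h => hna (Ideal.Quotient.eq_zero_iff_mem.mp h)
    obtain ⟨𝔮, h𝔮, hann⟩ := exists_le_isAssociatedPrime_of_isNoetherianRing
      (MvPolynomial (Fin (n + 1)) κ) (Ideal.Quotient.mk N a) h0
    have hq𝔮 : q ∈ 𝔮 := by
      apply hann
      rw [Submodule.mem_colon_singleton, Submodule.mem_bot]
      show q • (Ideal.Quotient.mk N a) = 0
      have : q • (Ideal.Quotient.mk N a) = Ideal.Quotient.mk N (q * a) := rfl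
      rw [this, Ideal.Quotient.eq_zero_iff_mem]
      exact ha
    exact hqavoid 𝔮 (hemb h𝔮) hq𝔮
  -- coefficient description of N
  set Nb := Ideal.comap cmap N with hNbdef
  have hN_coeffs : ∀ v ∈ Ideal.comap (GVD1.pe κ n).symm N, ∀ k, v.coeff k ∈ Nb := by
    have hle : Ideal.comap (GVD1.pe κ n).symm N
        ≤ GVD1.coeffsIn (MvPolynomial (Fin n) κ) Nb := by
      rw [Ideal.comap_symm, hNspan, Ideal.map_span]
      apply Ideal.span_le.mpr
      rintro g ⟨f, ⟨hfI, hfNV⟩, rfl⟩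
      obtain ⟨c, hc⟩ := GVD1.noVar_iff.mp hfNV
      rw [SetLike.mem_coe, GVD1.mem_coeffsIn]
      intro k
      rw [hc, Polynomial.coeff_C]
      split_ifs with hk
      · rw [hNbdef, Ideal.mem_comap, hcmap]
        have heq : (GVD1.pe κ n).symm (Polynomial.C c) = f := by
          rw [← hc, RingEquiv.symm_apply_apply]
        rw [heq, hNspan]
        exact Ideal.subset_span ⟨hfI, hfNV⟩
      · exact Nb.zero_mem
    intro v hv k
    exact GVD1.mem_coeffsIn.mp (hle hv) k
  have hmemN_of_coeffs : ∀ v : Polynomial (MvPolynomial (Fin n) κ),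
      (∀ k, v.coeff k ∈ Nb) → (GVD1.pe κ n).symm v ∈ N := by
    intro v hv
    have hmem : v ∈ Ideal.comap (GVD1.pe κ n).symm N := by
      apply GVD1.mem_of_coeffsC
      intro k
      have := hv k
      rwa [hNbdef, Ideal.mem_comap, hcmap, ← Ideal.mem_comap] at this
    exact Ideal.mem_comap.mp hmem
  have hq0NZ : ∀ c : MvPolynomial (Fin n) κ, q0 * c ∈ Nb → c ∈ Nb := by
    intro c hc
    rw [hNbdef, Ideal.mem_comap, hcmap] at hc ⊢
    rw [map_mul, map_mul, ← hqdef] at hc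
    exact hNZDq _ hc
  -- X*q + r is a nonzerodivisor mod N
  have hNZD2 : NZDMod N (X (Fin.last n) * q + r) := by
    intro a ha
    by_contra hna
    have hgn : ¬ ∀ k, (GVD1.pe κ n a).coeff k ∈ Nb := by
      intro hall
      have := hmemN_of_coeffs _ hall
      rw [RingEquiv.symm_apply_apply] at this
      exact hna this
    obtain ⟨cr, hcr⟩ := GVD1.noVar_iff.mp hrNV
    have hprod : ∀ k,
        (Polynomial.X * (Polynomial.C q0 * GVD1.pe κ n a)
          + Polynomial.C cr * GVD1.pe κ n a).coeff k ∈ Nb := by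
      have heq : GVD1.pe κ n ((X (Fin.last n) * q + r) * a)
          = Polynomial.X * (Polynomial.C q0 * GVD1.pe κ n a)
            + Polynomial.C cr * GVD1.pe κ n a := by
        rw [map_mul, map_add, map_mul, GVD1.pe_X, hqdef, RingEquiv.apply_symm_apply, hcr]
        ring
      intro k
      apply hN_coeffs _ _ k
      rw [← heq, Ideal.mem_comap, RingEquiv.symm_apply_apply]
      exact ha
    set g := GVD1.pe κ n a with hgdef
    set s2 := (Finset.range (g.natDegree + 1)).filter (fun m => g.coeff m ∉ Nb) with hs2
    have hs2ne : s2.Nonempty := by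
      push_neg at hgn
      obtain ⟨k, hk⟩ := hgn
      refine ⟨k, Finset.mem_filter.mpr ⟨Finset.mem_range.mpr ?_, hk⟩⟩
      by_contra hgt
      push_neg at hgt
      exact hk (by
        rw [Polynomial.coeff_eq_zero_of_natDegree_lt (by omega)]
        exact Nb.zero_mem)
    set m0 := s2.max' hs2ne with hm0
    have hm0mem := s2.max'_mem hs2ne
    have hm0n : g.coeff m0 ∉ Nb := (Finset.mem_filter.mp hm0mem).2
    have hnext : g.coeff (m0 + 1) ∈ Nb := by
      by_contra hcn
      by_cases hle : m0 + 1 ≤ g.natDegree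
      · have hmem2 : m0 + 1 ∈ s2 :=
          Finset.mem_filter.mpr ⟨Finset.mem_range.mpr (by omega), hcn⟩
        have := s2.le_max' _ hmem2
        omega
      · exact hcn (by
          rw [Polynomial.coeff_eq_zero_of_natDegree_lt (by omega)]
          exact Nb.zero_mem)
    have hkey := hprod (m0 + 1)
    rw [Polynomial.coeff_add, Polynomial.coeff_X_mul, Polynomial.coeff_C_mul,
      Polynomial.coeff_C_mul] at hkey
    have hmain : q0 * g.coeff m0 ∈ Nb := by
      have h2 : cr * g.coeff (m0 + 1) ∈ Nb := Nb.mul_mem_left _ hnext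
      have h3 := Nb.sub_mem hkey h2
      simpa using h3
    exact hm0n (hq0NZ _ hmain)
  exact ⟨q, hqC, r, hqNV, hrNV, hmemI, hNZDq, hNZD2⟩
end

section
/- Let I be an ideal of S such that in_{x_n}(I) = C(x_n,I) ∩ (N(x_n,I) + (x_n)) is a nondegenerate geometric vertex decomposition, suppose N(x_n,I) has no embedded primes, and fix q ∈ C(x_n,I) and r ∈ S with no term of q or r divisible by x_n such that x_n·q + r ∈ I and both q and x_n·q + r are nonzerodivisors modulo N(x_n,I). Then for each f ∈ C(x_n,I) there exists g_f ∈ S, unique modulo N(x_n,I), such that f·(x_n·q + r) − g_f·q ∈ N(x_n,I); moreover g_f may be chosen to lie in I. -/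
open MvPolynomial

namespace GVDAux

variable {κ : Type*} [Field κ] {σ : Type*} [DecidableEq σ]

/-- `f` is `y`-homogeneous of degree `e`. -/
def WH (y : σ) (e : ℕ) (f : MvPolynomial σ κ) : Prop :=
  ∀ b : σ →₀ ℕ, f.coeff b ≠ 0 → b y = e

lemma noVar_iff {y : σ} {f : MvPolynomial σ κ} :
    NoVar y f ↔ ∀ b : σ →₀ ℕ, f.coeff b ≠ 0 → b y = 0 := by
  constructor
  · intro h b hb; exact h b (mem_support_iff.mpr hb)
  · intro h b hb; exact h b (mem_support_iff.mp hb)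

/-- the `y`-degree-`e` slice of `f`. -/
noncomputable def sl (y : σ) (e : ℕ) (f : MvPolynomial σ κ) : MvPolynomial σ κ :=
  ∑ b ∈ f.support, if (b : σ →₀ ℕ) y = e then MvPolynomial.monomial b (f.coeff b) else 0

lemma coeff_sl (y : σ) (e : ℕ) (f : MvPolynomial σ κ) (c : σ →₀ ℕ) :
    (sl y e f).coeff c = if c y = e then f.coeff c else 0 := by
  classical
  rw [sl, coeff_sum, Finset.sum_eq_single c]
  · by_cases h : c y = e <;> simp [coeff_monomial, h]
  · intro b _ hbc
    by_cases h : b y = e <;> simp [coeff_monomial, h, hbc]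
  · intro hc
    rw [notMem_support_iff] at hc
    by_cases h : c y = e <;> simp [coeff_monomial, h, hc]

lemma coeff_inY_s2 (y : σ) (f : MvPolynomial σ κ) (c : σ →₀ ℕ) :
    (inY y f).coeff c = if c y = f.degreeOf y then f.coeff c else 0 := by
  classical
  rw [inY, coeff_sum, Finset.sum_eq_single c]
  · by_cases h : c y = f.degreeOf y <;> simp [coeff_monomial, h]
  · intro b _ hbc
    by_cases h : b y = f.degreeOf y <;> simp [coeff_monomial, h, hbc]
  · intro hc
    rw [notMem_support_iff] at hc
    by_cases h : c y = f.degreeOf y <;> simp [coeff_monomial, h, hc]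

lemma wh_sl (y : σ) (e : ℕ) (f : MvPolynomial σ κ) : WH y e (sl y e f) := by
  intro b hb
  rw [coeff_sl] at hb
  by_contra h
  simp [h] at hb

lemma wh_inY (y : σ) (f : MvPolynomial σ κ) : WH y (f.degreeOf y) (inY y f) := by
  intro b hb
  rw [coeff_inY_s2] at hb
  by_contra h
  simp [h] at hb

lemma sl_of_wh {y : σ} {d e : ℕ} {f : MvPolynomial σ κ} (h : WH y d f) :
    sl y e f = if e = d then f else 0 := by
  ext c
  rw [coeff_sl]
  by_cases hc : f.coeff c = 0
  · split <;> split <;> simp [hc]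
  · have hcd := h c hc
    rcases eq_or_ne e d with rfl | hne
    · simp [hcd]
    · rw [if_neg (by omega : ¬ c y = e), if_neg hne, coeff_zero]

lemma sl_sum (y : σ) (f : MvPolynomial σ κ) :
    f = ∑ e ∈ Finset.range (f.degreeOf y + 1), sl y e f := by
  ext c
  rw [coeff_sum]
  simp only [coeff_sl]
  rw [Finset.sum_ite_eq (Finset.range (f.degreeOf y + 1)) (c y) (fun _ => f.coeff c)]
  by_cases hc : f.coeff c = 0
  · simp [hc]
  · have hle : c y ≤ f.degreeOf y := by
      rw [degreeOf_eq_sup]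
      exact Finset.le_sup (f := fun m => m y) (mem_support_iff.mpr hc)
    rw [if_pos (Finset.mem_range.mpr (by omega))]

lemma sl_finsum {ι : Type*} (y : σ) (e : ℕ) (s : Finset ι) (u : ι → MvPolynomial σ κ) :
    sl y e (∑ i ∈ s, u i) = ∑ i ∈ s, sl y e (u i) := by
  ext c
  simp only [coeff_sl, coeff_sum]
  split_ifs with h <;> simp [coeff_sl, h]

lemma sl_mul_wh {y : σ} {d : ℕ} {u : MvPolynomial σ κ} (hu : WH y d u)
    (s : MvPolynomial σ κ) (e : ℕ) :
    sl y e (s * u) = if d ≤ e then sl y (e - d) s * u else 0 := by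
  classical
  ext c
  rw [coeff_sl]
  by_cases hde : d ≤ e
  · rw [if_pos hde, coeff_mul]
    by_cases hce : c y = e
    · rw [if_pos hce, coeff_mul]
      refine Finset.sum_congr rfl fun x hx => ?_
      have hadd : x.1 y + x.2 y = c y := by
        have := Finset.HasAntidiagonal.mem_antidiagonal.mp hx
        rw [← this]; simp
      by_cases h2 : u.coeff x.2 = 0
      · simp [h2]
      · have hd2 := hu _ h2
        rw [coeff_sl, if_pos (by omega : x.1 y = e - d)]
    · rw [if_neg hce, coeff_mul]
      symm
      refine Finset.sum_eq_zero fun x hx => ?_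
      have hadd : x.1 y + x.2 y = c y := by
        have := Finset.HasAntidiagonal.mem_antidiagonal.mp hx
        rw [← this]; simp
      by_cases h2 : u.coeff x.2 = 0
      · simp [h2]
      · have hd2 := hu _ h2
        rw [coeff_sl, if_neg (by omega : ¬ x.1 y = e - d), zero_mul]
  · rw [if_neg hde, coeff_zero]
    by_cases hce : c y = e
    · rw [if_pos hce, coeff_mul]
      refine Finset.sum_eq_zero fun x hx => ?_
      have hadd : x.1 y + x.2 y = c y := by
        have := Finset.HasAntidiagonal.mem_antidiagonal.mp hx
        rw [← this]; simp
      by_cases h2 : u.coeff x.2 = 0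
      · simp [h2]
      · have hd2 := hu _ h2
        exact absurd hd2 (by omega)
    · rw [if_neg hce]

lemma wh_strip {y : σ} {e : ℕ} {u : MvPolynomial σ κ} (hu : WH y e u) :
    ∃ c : MvPolynomial σ κ, u = X y ^ e * c ∧ NoVar y c := by
  classical
  refine ⟨u.divMonomial (Finsupp.single y e), ?_, ?_⟩
  · ext b
    rw [X_pow_eq_monomial, coeff_monomial_mul']
    by_cases hb : Finsupp.single y e ≤ b
    · rw [if_pos hb, one_mul, coeff_divMonomial]
      congr 1
      rw [add_tsub_cancel_of_le hb]
    · rw [if_neg hb]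
      by_contra hc
      have hby := hu b hc
      exact hb (by rw [← hby]; exact Finsupp.single_le_iff.mpr le_rfl)
  · rw [noVar_iff]
    intro b hb
    rw [coeff_divMonomial] at hb
    have := hu _ hb
    simp at this
    omega

lemma wh_X_pow (y : σ) (k : ℕ) : WH y k (X y ^ k : MvPolynomial σ κ) := by
  intro b hb
  rw [X_pow_eq_monomial, coeff_monomial] at hb
  by_cases h : Finsupp.single y k = b
  · rw [← h]; simp
  · simp [h] at hb

lemma wh_X_mul {y : σ} {f : MvPolynomial σ κ} (hf : NoVar y f) : WH y 1 (X y * f) := by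
  intro b hb
  have : (X y : MvPolynomial σ κ) = monomial (Finsupp.single y 1) 1 := by
    rw [← X_pow_eq_monomial, pow_one]
  rw [this, coeff_monomial_mul'] at hb
  by_cases h : Finsupp.single y 1 ≤ b
  · rw [if_pos h, one_mul] at hb
    have h0 := (noVar_iff.mp hf) _ hb
    have h1 : (1:ℕ) ≤ b y := Finsupp.single_le_iff.mp h
    rw [Finsupp.tsub_apply, Finsupp.single_apply, if_pos rfl] at h0
    omega
  · rw [if_neg h] at hb; exact absurd rfl hb

lemma noVar_mul {y : σ} {a b : MvPolynomial σ κ} (ha : NoVar y a) (hb : NoVar y b) :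
    NoVar y (a * b) := by
  rw [noVar_iff]
  intro c hc
  rw [coeff_mul] at hc
  obtain ⟨x, hx, hx0⟩ := Finset.exists_ne_zero_of_sum_ne_zero hc
  have h1 := (noVar_iff.mp ha) x.1 (left_ne_zero_of_mul hx0)
  have h2 := (noVar_iff.mp hb) x.2 (right_ne_zero_of_mul hx0)
  have : x.1 y + x.2 y = c y := by
    have := Finset.HasAntidiagonal.mem_antidiagonal.mp hx
    rw [← this]; simp
  omega

lemma noVar_sub {y : σ} {a b : MvPolynomial σ κ} (ha : NoVar y a) (hb : NoVar y b) :
    NoVar y (a - b) := by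
  rw [noVar_iff]
  intro c hc
  rw [coeff_sub] at hc
  rcases eq_or_ne (a.coeff c) 0 with h | h
  · exact (noVar_iff.mp hb) c (by intro h2; rw [h, h2] at hc; simp at hc)
  · exact (noVar_iff.mp ha) c h

lemma sl_mem_span {y : σ} {G : Set (MvPolynomial σ κ)}
    (hG : ∀ g ∈ G, ∃ d, WH y d g) {f : MvPolynomial σ κ}
    (hf : f ∈ Ideal.span G) (e : ℕ) : sl y e f ∈ Ideal.span G := by
  obtain ⟨m, s, g, rfl⟩ := Submodule.mem_span_set'.mp hf
  rw [sl_finsum]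
  refine Ideal.sum_mem _ fun i _ => ?_
  obtain ⟨d, hd⟩ := hG _ (g i).2
  rw [smul_eq_mul, sl_mul_wh hd]
  split
  · exact Ideal.mul_mem_left _ _ (Ideal.subset_span (g i).2)
  · exact Ideal.zero_mem _

lemma inY_of_deg_zero {y : σ} {h : MvPolynomial σ κ} (hd : h.degreeOf y = 0) :
    inY y h = h := by
  ext c
  rw [coeff_inY_s2, hd]
  by_cases hc : h.coeff c = 0
  · simp [hc]
  · have : c y ≤ h.degreeOf y := by
      rw [degreeOf_eq_sup]
      exact Finset.le_sup (f := fun m => m y) (mem_support_iff.mpr hc)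
    rw [if_pos (by omega)]

lemma noVar_of_deg_zero {y : σ} {h : MvPolynomial σ κ} (hd : h.degreeOf y = 0) :
    NoVar y h := by
  rw [noVar_iff]
  intro c hc
  have : c y ≤ h.degreeOf y := by
    rw [degreeOf_eq_sup]
    exact Finset.le_sup (f := fun m => m y) (mem_support_iff.mpr hc)
  omega

lemma noVar_sub_inY {y : σ} {h : MvPolynomial σ κ} (hd : h.degreeOf y ≤ 1) :
    NoVar y (h - inY y h) := by
  rw [noVar_iff]
  intro c hc
  rw [coeff_sub, coeff_inY_s2] at hc
  by_cases h0 : h.coeff c = 0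
  · simp [h0] at hc
  · have hle : c y ≤ h.degreeOf y := by
      rw [degreeOf_eq_sup]
      exact Finset.le_sup (f := fun m => m y) (mem_support_iff.mpr h0)
    by_cases h1 : c y = h.degreeOf y
    · rw [if_pos h1] at hc; simp at hc
    · omega

end GVDAux

namespace GVDAux

variable {κ : Type*} [Field κ] {σ : Type*} [DecidableEq σ]

/-- The ideal of `f` such that `f·(yq+r) ≡ g·q mod N(y,I)` for some `g ∈ I`. -/
noncomputable def Gid (y : σ) (I : Ideal (MvPolynomial σ κ)) (q r : MvPolynomial σ κ) :
    Ideal (MvPolynomial σ κ) where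
  carrier := {f | ∃ g ∈ I, f * (X y * q + r) - g * q ∈ Nyd y I}
  zero_mem' := ⟨0, I.zero_mem, by simp⟩
  add_mem' := by
    rintro a b ⟨ga, hga, ha⟩ ⟨gb, hgb, hb⟩
    refine ⟨ga + gb, I.add_mem hga hgb, ?_⟩
    have h := (Nyd y I).add_mem ha hb
    have e : (a + b) * (X y * q + r) - (ga + gb) * q =
        (a * (X y * q + r) - ga * q) + (b * (X y * q + r) - gb * q) := by ring
    rwa [e]
  smul_mem' := by
    rintro c a ⟨g, hg, ha⟩
    refine ⟨c * g, I.mul_mem_left c hg, ?_⟩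
    have h := (Nyd y I).mul_mem_left c ha
    have e : (c • a) * (X y * q + r) - (c * g) * q = c * (a * (X y * q + r) - g * q) := by
      simp only [smul_eq_mul]; ring
    rwa [e]

lemma mem_Gid {y : σ} {I : Ideal (MvPolynomial σ κ)} {q r f : MvPolynomial σ κ} :
    f ∈ Gid y I q r ↔ ∃ g ∈ I, f * (X y * q + r) - g * q ∈ Nyd y I := Iff.rfl

lemma Nyd_le_Gid (y : σ) (I : Ideal (MvPolynomial σ κ)) (q r : MvPolynomial σ κ) :
    Nyd y I ≤ Gid y I q r := by
  unfold Nyd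
  rw [Ideal.span_le]
  rintro h ⟨hI, hN⟩
  refine ⟨0, I.zero_mem, ?_⟩
  have e : h * (X y * q + r) - 0 * q = h * (X y * q + r) := by ring
  rw [e]
  exact Ideal.mul_mem_right _ _ (Ideal.subset_span ⟨hI, hN⟩)

lemma c_mem_Gid {y : σ} {I : Ideal (MvPolynomial σ κ)} {q r : MvPolynomial σ κ}
    (hq : NoVar y q) (hr : NoVar y r) (hqrI : X y * q + r ∈ I)
    {h c : MvPolynomial σ κ} (hhI : h ∈ I) (hdeg : h.degreeOf y ≤ 1)
    (hc : inY y h = X y * c) (hcn : NoVar y c) : c ∈ Gid y I q r := by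
  refine ⟨h, hhI, ?_⟩
  have hIm : c * (X y * q + r) - h * q ∈ I :=
    Ideal.sub_mem _ (I.mul_mem_left c hqrI) (I.mul_mem_right q hhI)
  have hNv : NoVar y (c * (X y * q + r) - h * q) := by
    have e : c * (X y * q + r) - h * q = c * r - (h - X y * c) * q := by ring
    rw [e, ← hc]
    exact noVar_sub (noVar_mul hcn hr) (noVar_mul (noVar_sub_inY hdeg) hq)
  exact Ideal.subset_span ⟨hIm, hNv⟩

lemma core_mem_Gid {y : σ} {I : Ideal (MvPolynomial σ κ)} {q r : MvPolynomial σ κ}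
    (hq : NoVar y q) (hr : NoVar y r) (hqrI : X y * q + r ∈ I)
    (hGVD : inYIdeal y I = Cyd y I ⊓ (Nyd y I + Ideal.span {X y}))
    {f : MvPolynomial σ κ} (hf : NoVar y f) (hfC : f ∈ Cyd y I) :
    f ∈ Gid y I q r := by
  have h1 : X y * f ∈ inYIdeal y I := by
    rw [hGVD]
    refine Submodule.mem_inf.mpr ⟨Ideal.mul_mem_left _ _ hfC, ?_⟩
    rw [Submodule.add_eq_sup]
    exact Submodule.mem_sup_right (Ideal.mem_span_singleton.mpr ⟨f, rfl⟩)
  have h1' : X y * f ∈ Ideal.span { g | ∃ h ∈ I, g = inY y h } := h1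
  obtain ⟨m, s, g, hrep⟩ := Submodule.mem_span_set'.mp h1'
  have key : ∀ i : Fin m, ∃ F, F ∈ Gid y I q r ∧
      sl y 1 (s i • (g i : MvPolynomial σ κ)) = X y * F := by
    intro i
    obtain ⟨h, hhI, hg⟩ := (g i).2
    have hwh : WH y (h.degreeOf y) ((g i : MvPolynomial σ κ)) := by
      rw [hg]; exact wh_inY y h
    rw [smul_eq_mul, sl_mul_wh hwh]
    rcases Nat.lt_or_ge 1 (h.degreeOf y) with hd | hd
    · rw [if_neg (by omega)]
      exact ⟨0, (Gid y I q r).zero_mem, (mul_zero _).symm⟩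
    · rw [if_pos hd]
      rcases Nat.le_one_iff_eq_zero_or_eq_one.mp hd with h0 | h1d
      · obtain ⟨t, ht, htn⟩ := wh_strip (wh_sl y 1 (s i))
        refine ⟨t * h, ?_, ?_⟩
        · exact Ideal.mul_mem_left _ _
            (Nyd_le_Gid y I q r (Ideal.subset_span ⟨hhI, noVar_of_deg_zero h0⟩))
        · rw [h0, hg, inY_of_deg_zero h0, Nat.sub_zero, ht, pow_one]
          ring
      · have hwh1 : WH y 1 ((g i : MvPolynomial σ κ)) := by rw [← h1d]; exact hwh
        obtain ⟨c, hcstrip, hcn⟩ := wh_strip hwh1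
        have hceq : inY y h = X y * c := by rw [← hg, hcstrip, pow_one]
        refine ⟨sl y 0 (s i) * c, ?_, ?_⟩
        · exact Ideal.mul_mem_left _ _ (c_mem_Gid hq hr hqrI hhI hd hceq hcn)
        · rw [h1d, hcstrip, pow_one]
          ring
  choose F hF1 hF2 using key
  have hwf : WH y 1 (X y * f) := wh_X_mul hf
  have heq : X y * f = X y * ∑ i, F i := by
    calc X y * f = sl y 1 (X y * f) := by rw [sl_of_wh hwf, if_pos rfl]
    _ = sl y 1 (∑ i, s i • (g i : MvPolynomial σ κ)) := by rw [hrep]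
    _ = ∑ i, sl y 1 (s i • (g i : MvPolynomial σ κ)) := sl_finsum y 1 Finset.univ _
    _ = ∑ i, X y * F i := Finset.sum_congr rfl fun i _ => hF2 i
    _ = X y * ∑ i, F i := (Finset.mul_sum _ _ _).symm
  have hf' := mul_left_cancel₀ (X_ne_zero y : (X y : MvPolynomial σ κ) ≠ 0) heq
  rw [hf']
  exact Ideal.sum_mem _ fun i _ => hF1 i

lemma C_le_Gid {y : σ} {I : Ideal (MvPolynomial σ κ)} {q r : MvPolynomial σ κ}
    (hq : NoVar y q) (hr : NoVar y r) (hqrI : X y * q + r ∈ I)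
    (hGVD : inYIdeal y I = Cyd y I ⊓ (Nyd y I + Ideal.span {X y})) :
    Cyd y I ≤ Gid y I q r := by
  intro f hfC
  obtain ⟨k, hk⟩ := hfC
  have hGgens : ∀ g ∈ { g | ∃ h ∈ I, g = inY y h }, ∃ d, WH y d (g : MvPolynomial σ κ) := by
    rintro g ⟨h, hh, rfl⟩; exact ⟨h.degreeOf y, wh_inY y h⟩
  have hmain : ∀ e, sl y e f ∈ Gid y I q r := by
    intro e
    have hk' : f * X y ^ k ∈ Ideal.span { g | ∃ h ∈ I, g = inY y h } := by
      rw [mul_comm]; exact hk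
    have hsl := sl_mem_span hGgens hk' (k + e)
    rw [sl_mul_wh (wh_X_pow y k) f (k + e), if_pos (by omega : k ≤ k + e),
      (by omega : k + e - k = e)] at hsl
    obtain ⟨fe, hfe, hfen⟩ := wh_strip (wh_sl y e f)
    have hfeC : fe ∈ Cyd y I := by
      refine ⟨k + e, ?_⟩
      have e1 : X y ^ (k + e) * fe = sl y e f * X y ^ k := by rw [hfe]; ring
      rw [e1]; exact hsl
    have := core_mem_Gid hq hr hqrI hGVD hfen hfeC
    rw [hfe]
    exact Ideal.mul_mem_left _ _ this
  have hsum := sl_sum y f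
  rw [hsum]
  exact Ideal.sum_mem _ fun e _ => hmain e

end GVDAux

/-- Part (2): for each `f ∈ C(x_n,I)` there is `g_f`, unique modulo `N(x_n,I)`, with
`f·(x_n·q + r) − g_f·q ∈ N(x_n,I)`, and `g_f` may be chosen in `I`. -/
theorem gvd_part2 {p : ℕ} [Fact p.Prime] {κ : Type*} [Field κ] [CharP κ p] [PerfectRing κ p]
    {n : ℕ} (I : Ideal (MvPolynomial (Fin (n + 1)) κ))
    (hgvd : IsNondegGVD (Fin.last n) I)
    (hemb : NoEmbeddedPrimes (Nyd (Fin.last n) I))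
    (q r : MvPolynomial (Fin (n + 1)) κ)
    (hqC : q ∈ Cyd (Fin.last n) I)
    (hq : NoVar (Fin.last n) q) (hr : NoVar (Fin.last n) r)
    (hqrI : X (Fin.last n) * q + r ∈ I)
    (hqnzd : NZDMod (Nyd (Fin.last n) I) q)
    (hqrnzd : NZDMod (Nyd (Fin.last n) I) (X (Fin.last n) * q + r)) :
    ∀ f ∈ Cyd (Fin.last n) I,
      ∃ gf : MvPolynomial (Fin (n + 1)) κ, gf ∈ I ∧
        f * (X (Fin.last n) * q + r) - gf * q ∈ Nyd (Fin.last n) I ∧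
        ∀ gf' : MvPolynomial (Fin (n + 1)) κ,
          f * (X (Fin.last n) * q + r) - gf' * q ∈ Nyd (Fin.last n) I →
            gf' - gf ∈ Nyd (Fin.last n) I := by
  intro f hf
  obtain ⟨g, hgI, hgN⟩ := GVDAux.C_le_Gid hq hr hqrI hgvd.1.1 hf
  refine ⟨g, hgI, hgN, ?_⟩
  intro g' hg'
  have hmem : (g' - g) * q ∈ Nyd (Fin.last n) I := by
    have e : (g' - g) * q =
        (f * (X (Fin.last n) * q + r) - g * q) - (f * (X (Fin.last n) * q + r) - g' * q) := by
      ring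
    rw [e]
    exact Ideal.sub_mem _ hgN hg'
  exact hqnzd _ (by rwa [mul_comm] at hmem)
end

section
/- Let I be an ideal of S such that in_{x_n}(I) = C(x_n,I) ∩ (N(x_n,I) + (x_n)) is a nondegenerate geometric vertex decomposition, suppose N(x_n,I) has no embedded primes, and fix q ∈ C(x_n,I) and r ∈ S with no term of q or r divisible by x_n such that x_n·q + r ∈ I and both q and x_n·q + r are nonzerodivisors modulo N(x_n,I). Then there is an isomorphism of S-modules ψ : C(x_n,I)/N(x_n,I) → I/N(x_n,I) such that for every f ∈ C(x_n,I), ψ(f mod N(x_n,I)) = g_f mod N(x_n,I), where g_f ∈ S is any element satisfying f·(x_n·q + r) − g_f·q ∈ N(x_n,I). -/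
open MvPolynomial

section CompCalc
set_option linter.unusedSectionVars false
variable {κ : Type*} [Field κ] {σ : Type*} [DecidableEq σ] {y : σ}

/-- The `y`-degree-`j` component of `f`. -/
noncomputable def compY (y : σ) (j : ℕ) (f : MvPolynomial σ κ) : MvPolynomial σ κ :=
  ∑ b ∈ f.support, if (b : σ →₀ ℕ) y = j then MvPolynomial.monomial b (f.coeff b) else 0

lemma inY_eq_compY (f : MvPolynomial σ κ) : inY y f = compY y (f.degreeOf y) f := rfl

lemma coeff_compY (j : ℕ) (f : MvPolynomial σ κ) (b : σ →₀ ℕ) :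
    coeff b (compY y j f) = if b y = j then coeff b f else 0 := by
  rw [compY, coeff_sum]
  by_cases hb : b ∈ f.support
  · rw [Finset.sum_eq_single b (fun b' _ hne => ?_) (fun h => absurd hb h)]
    · rw [apply_ite (coeff b), coeff_monomial, if_pos rfl, coeff_zero]
    · rw [apply_ite (coeff b), coeff_monomial, if_neg hne, coeff_zero, ite_self]
  · rw [notMem_support_iff.mp hb, ite_self]
    refine Finset.sum_eq_zero fun b' hb' => ?_
    rw [apply_ite (coeff b), coeff_monomial, coeff_zero,
      if_neg (fun h : b' = b => hb (h ▸ hb')), ite_self]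

lemma compY_apply_ne {j : ℕ} {f : MvPolynomial σ κ} {b : σ →₀ ℕ}
    (h : coeff b (compY y j f) ≠ 0) : b y = j := by
  by_contra hb; rw [coeff_compY, if_neg hb] at h; exact h rfl

lemma compY_add (j : ℕ) (f g : MvPolynomial σ κ) :
    compY y j (f + g) = compY y j f + compY y j g := by
  ext b; simp only [coeff_compY, coeff_add]; split <;> simp

@[simp] lemma compY_zero (j : ℕ) : compY y j (0 : MvPolynomial σ κ) = 0 := by
  ext b; simp [coeff_compY]

lemma compY_sum {α : Type*} (s : Finset α) (F : α → MvPolynomial σ κ) (j : ℕ) :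
    compY y j (∑ a ∈ s, F a) = ∑ a ∈ s, compY y j (F a) := by
  classical
  induction s using Finset.induction_on with
  | empty => simp
  | @insert a s' ha ih => rw [Finset.sum_insert ha, Finset.sum_insert ha, compY_add, ih]

lemma coeff_eq_zero_of_degreeOf_lt {f : MvPolynomial σ κ} {b : σ →₀ ℕ}
    (h : f.degreeOf y < b y) : coeff b f = 0 := by
  by_contra hc
  exact absurd (monomial_le_degreeOf y (mem_support_iff.mpr hc)) (not_le.mpr h)

lemma compY_eq_zero_of_gt {j : ℕ} {f : MvPolynomial σ κ} (h : f.degreeOf y < j) :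
    compY y j f = 0 := by
  ext b
  rw [coeff_compY, coeff_zero]
  split
  · next hb => exact coeff_eq_zero_of_degreeOf_lt (hb ▸ h)
  · rfl

lemma sum_compY (f : MvPolynomial σ κ) :
    ∑ j ∈ Finset.range (f.degreeOf y + 1), compY y j f = f := by
  ext b
  rw [coeff_sum]
  simp only [coeff_compY]
  rw [Finset.sum_ite_eq (Finset.range (f.degreeOf y + 1)) (b y) (fun _ => coeff b f)]
  split
  · rfl
  · next h =>
    rw [Finset.mem_range, not_lt] at h
    exact (coeff_eq_zero_of_degreeOf_lt (show degreeOf y f < b y by omega)).symm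

end CompCalc
section NoVarCalc
set_option linter.unusedSectionVars false
variable {κ : Type*} [Field κ] {σ : Type*} [DecidableEq σ] {y : σ}

lemma noVar_iff {f : MvPolynomial σ κ} :
    NoVar y f ↔ ∀ b : σ →₀ ℕ, coeff b f ≠ 0 → b y = 0 := by
  constructor
  · intro h b hb; exact h b (mem_support_iff.mpr hb)
  · intro h b hb; exact h b (mem_support_iff.mp hb)

lemma noVar_iff_degreeOf {f : MvPolynomial σ κ} : NoVar y f ↔ degreeOf y f = 0 := by
  rw [degreeOf_eq_sup]
  constructor
  · intro h; exact Nat.le_zero.mp (Finset.sup_le fun b hb => le_of_eq (h b hb))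
  · intro h b hb; exact Nat.le_zero.mp (h ▸ Finset.le_sup (f := fun m => m y) hb)

@[simp] lemma noVar_zero : NoVar y (0 : MvPolynomial σ κ) := by
  rw [noVar_iff]; simp

lemma NoVar.add {f g : MvPolynomial σ κ} (hf : NoVar y f) (hg : NoVar y g) :
    NoVar y (f + g) := by
  rw [noVar_iff] at *
  intro b hb
  rw [coeff_add] at hb
  by_cases h : coeff b f = 0
  · exact hg b (by rw [h, zero_add] at hb; exact hb)
  · exact hf b h

lemma NoVar.sub {f g : MvPolynomial σ κ} (hf : NoVar y f) (hg : NoVar y g) :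
    NoVar y (f - g) := by
  rw [noVar_iff] at *
  intro b hb
  rw [coeff_sub] at hb
  by_cases h : coeff b f = 0
  · exact hg b (fun h' => hb (by rw [h, h', sub_zero]))
  · exact hf b h

lemma NoVar.mul {f g : MvPolynomial σ κ} (hf : NoVar y f) (hg : NoVar y g) :
    NoVar y (f * g) := by
  rw [noVar_iff_degreeOf] at *
  have := degreeOf_mul_le y f g
  omega

lemma NoVar.sum {α : Type*} {s : Finset α} {F : α → MvPolynomial σ κ}
    (h : ∀ a ∈ s, NoVar y (F a)) : NoVar y (∑ a ∈ s, F a) := by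
  classical
  induction s using Finset.induction_on with
  | empty => simp
  | @insert a s' ha ih =>
    rw [Finset.sum_insert ha]
    exact (h a (Finset.mem_insert_self a s')).add
      (ih fun a' ha' => h a' (Finset.mem_insert_of_mem ha'))

lemma degreeOf_X_pow_mul_le (k : ℕ) (f : MvPolynomial σ κ) :
    degreeOf y (X y ^ k * f) ≤ k + degreeOf y f := by
  refine le_trans (degreeOf_mul_le y _ f) ?_
  have : degreeOf y ((X y : MvPolynomial σ κ) ^ k) ≤ k := by
    classical
    rw [X_pow_eq_monomial, degreeOf_le_iff]
    intro m hm
    rw [support_monomial, if_neg one_ne_zero, Finset.mem_singleton] at hm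
    subst hm
    simp
  omega

lemma compY_mul_monomial (j : ℕ) (f : MvPolynomial σ κ) (m : σ →₀ ℕ) (a : κ) (hm : m y = 0) :
    compY y j (f * monomial m a) = compY y j f * monomial m a := by
  ext b
  rw [coeff_compY, coeff_mul_monomial', coeff_mul_monomial', coeff_compY]
  by_cases h1 : m ≤ b
  · rw [if_pos h1, if_pos h1]
    have hsub : (b - m) y = b y := by rw [Finsupp.tsub_apply, hm, Nat.sub_zero]
    rw [hsub]
    split <;> simp
  · rw [if_neg h1, if_neg h1, ite_self]

/-- compY of `f * s` when `s` has no `y`. -/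
lemma compY_mul_noVar (j : ℕ) (f s : MvPolynomial σ κ) (hs : NoVar y s) :
    compY y j (f * s) = compY y j f * s := by
  have hs' : f * s = ∑ m ∈ s.support, f * monomial m (coeff m s) := by
    rw [← Finset.mul_sum, ← as_sum]
  rw [hs', compY_sum,
    Finset.sum_congr rfl (fun m hm => compY_mul_monomial j f m _ (hs m hm)),
    ← Finset.mul_sum, ← as_sum]

lemma compY_X_pow_mul (j k : ℕ) (f : MvPolynomial σ κ) :
    compY y (j + k) (X y ^ k * f) = X y ^ k * compY y j f := by
  ext b
  rw [coeff_compY, mul_comm (X y ^ k) f, mul_comm (X y ^ k) (compY y j f), X_pow_eq_monomial,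
    coeff_mul_monomial', coeff_mul_monomial', coeff_compY]
  have hsub : (b - Finsupp.single y k) y = b y - k := by
    rw [Finsupp.tsub_apply, Finsupp.single_eq_same]
  by_cases h1 : Finsupp.single y k ≤ b
  · have hk : k ≤ b y := Finsupp.single_le_iff.mp h1
    rw [if_pos h1, if_pos h1, hsub]
    simp only [mul_one]
    have hiff : (b y = j + k) ↔ (b y - k = j) := by omega
    simp only [hiff]
  · rw [if_neg h1, if_neg h1, ite_self]

lemma compY_X_pow_mul_eq_zero {j k : ℕ} (h : j < k) (f : MvPolynomial σ κ) :
    compY y j (X y ^ k * f) = 0 := by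
  ext b
  rw [coeff_compY, mul_comm (X y ^ k) f, X_pow_eq_monomial, coeff_mul_monomial', coeff_zero]
  by_cases h2 : b y = j
  · rw [if_pos h2, if_neg (fun hle => by
      have := Finsupp.single_le_iff.mp hle
      omega)]
  · rw [if_neg h2]

/-- Division: a `y`-homogeneous polynomial of degree `j` is `y^j` times a `y`-free one. -/
lemma exists_noVar_of_homog {j : ℕ} {f : MvPolynomial σ κ}
    (h : ∀ b : σ →₀ ℕ, coeff b f ≠ 0 → b y = j) :
    ∃ f', NoVar y f' ∧ f = X y ^ j * f' := by
  refine ⟨∑ b ∈ f.support, monomial (b.erase y) (coeff b f), ?_, ?_⟩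
  · intro b hb
    rw [mem_support_iff] at hb
    by_contra hby
    apply hb
    rw [coeff_sum]
    refine Finset.sum_eq_zero fun b' _ => ?_
    rw [coeff_monomial, if_neg]
    intro he
    exact hby (by rw [← he, Finsupp.erase_same])
  · conv_lhs => rw [as_sum f]
    rw [Finset.mul_sum]
    refine Finset.sum_congr rfl fun b hb => ?_
    have hby : b y = j := h b (mem_support_iff.mp hb)
    have hbe : Finsupp.single y j + Finsupp.erase y b = b := by
      ext i
      rw [Finsupp.add_apply]
      by_cases hi : i = y
      · subst hi; rw [Finsupp.erase_same, Finsupp.single_eq_same, hby, add_zero]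
      · rw [Finsupp.erase_ne hi, Finsupp.single_eq_of_ne' (Ne.symm hi), zero_add]
    rw [X_pow_eq_monomial, monomial_mul, one_mul, hbe]

end NoVarCalc
section Extraction
set_option linter.unusedSectionVars false
variable {κ : Type*} [Field κ] {σ : Type*} [DecidableEq σ] {y : σ}

lemma compY_compY_self (j : ℕ) (f : MvPolynomial σ κ) :
    compY y j (compY y j f) = compY y j f := by
  ext b
  rw [coeff_compY, coeff_compY]
  by_cases h : b y = j
  · rw [if_pos h, if_pos h]
  · rw [if_neg h, if_neg h]

lemma compY_compY_ne {j j' : ℕ} (h : j ≠ j') (f : MvPolynomial σ κ) :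
    compY y j (compY y j' f) = 0 := by
  ext b
  rw [coeff_compY, coeff_compY, coeff_zero]
  by_cases hb : b y = j
  · rw [if_pos hb, if_neg (fun hh => h (hb.symm.trans hh))]
  · rw [if_neg hb]

lemma compY_noVar {f : MvPolynomial σ κ} (hf : NoVar y f) : compY y 0 f = f := by
  ext b
  rw [coeff_compY]
  by_cases h : b y = 0
  · rw [if_pos h]
  · rw [if_neg h]
    by_contra hc
    exact h (noVar_iff.mp hf b fun h0 => hc h0.symm)

lemma noVar_compY_zero (f : MvPolynomial σ κ) : NoVar y (compY y 0 f) := by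
  rw [noVar_iff]
  exact fun b hb => compY_apply_ne hb

lemma compY_mul_homog {a j : ℕ} {s : MvPolynomial σ κ}
    (hs : ∀ b : σ →₀ ℕ, coeff b s ≠ 0 → b y = a) (x : MvPolynomial σ κ) :
    compY y (j + a) (s * x) = s * compY y j x := by
  obtain ⟨s', hs', rfl⟩ := exists_noVar_of_homog hs
  rw [mul_assoc, compY_X_pow_mul, mul_comm s' x, compY_mul_noVar _ _ _ hs']
  ring

lemma compY_mul_homog_zero {a d : ℕ} (hlt : d < a) {s : MvPolynomial σ κ}
    (hs : ∀ b : σ →₀ ℕ, coeff b s ≠ 0 → b y = a) (x : MvPolynomial σ κ) :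
    compY y d (s * x) = 0 := by
  obtain ⟨s', hs', rfl⟩ := exists_noVar_of_homog hs
  rw [mul_assoc, compY_X_pow_mul_eq_zero hlt]

/-- Every element of `in_y(I)` agrees in `y`-degree `d` with some element of `I`
having no part of `y`-degree `> d`. -/
lemma exists_comp_rep {I : Ideal (MvPolynomial σ κ)} {f : MvPolynomial σ κ}
    (hf : f ∈ inYIdeal y I) :
    ∀ d : ℕ, ∃ g ∈ I, compY y d g = compY y d f ∧ ∀ j, d < j → compY y j g = 0 := by
  rw [inYIdeal] at hf
  induction hf using Submodule.span_induction with
  | mem x hx =>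
    obtain ⟨h, hI, rfl⟩ := hx
    intro d
    by_cases hd : d = degreeOf y h
    · subst hd
      refine ⟨h, hI, ?_, fun j hj => compY_eq_zero_of_gt hj⟩
      rw [inY_eq_compY, compY_compY_self]
    · exact ⟨0, I.zero_mem, by rw [inY_eq_compY, compY_compY_ne hd, compY_zero], fun j _ =>
        compY_zero j⟩
  | zero =>
    exact fun d => ⟨0, I.zero_mem, by rw [compY_zero], fun j _ => compY_zero j⟩
  | add x x' hx hx' ihx ihx' =>
    intro d
    obtain ⟨g1, hg1, e1, z1⟩ := ihx d
    obtain ⟨g2, hg2, e2, z2⟩ := ihx' d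
    exact ⟨g1 + g2, I.add_mem hg1 hg2, by rw [compY_add, compY_add, e1, e2],
      fun j hj => by rw [compY_add, z1 j hj, z2 j hj, add_zero]⟩
  | smul s x hx ih =>
    intro d
    choose g hgI hgeq hgz using ih
    rw [smul_eq_mul]
    refine ⟨∑ a ∈ Finset.range (degreeOf y s + 1),
      if a ≤ d then compY y a s * g (d - a) else 0, ?_, ?_, ?_⟩
    · refine Ideal.sum_mem _ fun a _ => ?_
      split
      · exact Ideal.mul_mem_left _ _ (hgI (d - a))
      · exact I.zero_mem
    · have hsx : s * x = ∑ a ∈ Finset.range (degreeOf y s + 1), compY y a s * x := by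
        conv_lhs => rw [← sum_compY (f := s) (y := y)]
        rw [Finset.sum_mul]
      rw [hsx, compY_sum, compY_sum]
      refine Finset.sum_congr rfl fun a _ => ?_
      by_cases ha : a ≤ d
      · rw [if_pos ha]
        have hda : d - a + a = d := by omega
        have e1 := compY_mul_homog (s := compY y a s) (j := d - a)
          (fun _ hb => compY_apply_ne hb) x
        have e2 := compY_mul_homog (s := compY y a s) (j := d - a)
          (fun _ hb => compY_apply_ne hb) (g (d - a))
        rw [hda] at e1 e2
        rw [e1, e2, hgeq]
      · rw [if_neg ha, compY_zero]
        exact (compY_mul_homog_zero (a := a) (d := d) (by omega) (fun _ hb => compY_apply_ne hb) x).symm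
    · intro j hj
      rw [compY_sum]
      refine Finset.sum_eq_zero fun a _ => ?_
      by_cases ha : a ≤ d
      · rw [if_pos ha]
        have e2 := compY_mul_homog (s := compY y a s) (j := j - a)
          (fun _ hb => compY_apply_ne hb) (g (d - a))
        rw [show j - a + a = j by omega] at e2
        rw [e2, hgz _ _ (by omega), mul_zero]
      · rw [if_neg ha, compY_zero]

/-- `in_y(I)` is `y`-homogeneous. -/
lemma compY_mem_inYIdeal {I : Ideal (MvPolynomial σ κ)} {f : MvPolynomial σ κ}
    (hf : f ∈ inYIdeal y I) (m : ℕ) : compY y m f ∈ inYIdeal y I := by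
  obtain ⟨g, hgI, hge, hgz⟩ := exists_comp_rep hf m
  rw [← hge]
  by_cases h0 : compY y m g = 0
  · rw [h0]; exact zero_mem _
  · have hle : m ≤ degreeOf y g := by
      obtain ⟨b, hb⟩ := ne_zero_iff.mp h0
      have hbm := compY_apply_ne hb
      rw [coeff_compY, if_pos hbm] at hb
      exact hbm ▸ monomial_le_degreeOf y (mem_support_iff.mpr hb)
    have hge' : degreeOf y g ≤ m := by
      by_contra hc
      push_neg at hc
      have hne : g ≠ 0 := fun h => h0 (by rw [h, compY_zero])
      obtain ⟨b, hbmem, hbval⟩ :=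
        Finset.exists_mem_eq_sup g.support (support_nonempty.mpr hne) (fun m => m y)
      have hcne : compY y (degreeOf y g) g ≠ 0 := by
        intro hz
        have hco := coeff_compY (y := y) (degreeOf y g) g b
        rw [hz, coeff_zero, if_pos (by rw [degreeOf_eq_sup, hbval])] at hco
        exact (mem_support_iff.mp hbmem) hco.symm
      exact hcne (hgz _ hc)
    have hdeg : degreeOf y g = m := le_antisymm hge' hle
    rw [← hdeg]
    exact Ideal.subset_span ⟨g, hgI, (inY_eq_compY g).symm⟩

lemma mem_Cyd {I : Ideal (MvPolynomial σ κ)} {f : MvPolynomial σ κ} :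
    f ∈ Cyd y I ↔ ∃ k : ℕ, X y ^ k * f ∈ inYIdeal y I := Iff.rfl

lemma compY_mem_Cyd {I : Ideal (MvPolynomial σ κ)} {c : MvPolynomial σ κ}
    (hc : c ∈ Cyd y I) (j : ℕ) : compY y j c ∈ Cyd y I := by
  obtain ⟨k, hk⟩ := mem_Cyd.mp hc
  refine mem_Cyd.mpr ⟨k, ?_⟩
  rw [← compY_X_pow_mul]
  exact compY_mem_inYIdeal hk (j + k)

end Extraction
section MainLemmas
set_option linter.unusedSectionVars false
variable {κ : Type*} [Field κ] {σ : Type*} [DecidableEq σ] {y : σ}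
  {I : Ideal (MvPolynomial σ κ)} {q r : MvPolynomial σ κ}

lemma mem_Nyd_of_noVar {f : MvPolynomial σ κ} (hf : f ∈ I) (hnv : NoVar y f) :
    f ∈ Nyd y I :=
  Ideal.subset_span ⟨hf, hnv⟩

/-- Core lemma: for `y`-free `c ∈ C(y,I)` there is `s` `y`-free with `y·c + s ∈ I`,
and then `(yq+r)·c − q·(yc+s)` is `y`-free and in `I`, hence in `N`. -/
lemma L1core (hgvd_eq : inYIdeal y I = Cyd y I ⊓ (Nyd y I + Ideal.span {X y}))
    {c : MvPolynomial σ κ} (hc : c ∈ Cyd y I) (hcv : NoVar y c)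
    (hq : NoVar y q) (hr : NoVar y r) (hqrI : X y * q + r ∈ I) :
    ∃ s : MvPolynomial σ κ, NoVar y s ∧ X y * c + s ∈ I ∧
      (X y * q + r) * c - q * (X y * c + s) ∈ Nyd y I := by
  have h1 : X y * c ∈ inYIdeal y I := by
    rw [hgvd_eq]
    refine Submodule.mem_inf.mpr ⟨Ideal.mul_mem_left _ _ hc, Submodule.mem_sup_right ?_⟩
    exact Ideal.mem_span_singleton.mpr ⟨c, rfl⟩
  obtain ⟨g, hgI, hgeq, hgz⟩ := exists_comp_rep h1 1
  have hXc : compY y 1 (X y * c) = X y * c := by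
    have h0 := compY_X_pow_mul (y := y) 0 1 c
    rw [pow_one, compY_noVar hcv] at h0
    exact h0
  set s := compY y 0 g with hs
  have hsnv : NoVar y s := noVar_compY_zero g
  have hg_decomp : g = X y * c + s := by
    have hbig : ∀ b : σ →₀ ℕ, 1 < b y → coeff b g = 0 := by
      intro b hb
      have := coeff_compY (y := y) (b y) g b
      rw [if_pos rfl, hgz (b y) hb, coeff_zero] at this
      exact this.symm
    have hXc' : X y * c = compY y 1 g := by rw [hgeq, hXc]
    rw [hXc', hs]
    ext b
    rw [coeff_add, coeff_compY, coeff_compY]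
    by_cases h0 : b y = 0
    · rw [if_pos h0, if_neg (by omega), zero_add]
    · by_cases h1 : b y = 1
      · rw [if_pos h1, if_neg (by omega), add_zero]
      · rw [if_neg h0, if_neg h1, add_zero]
        exact hbig b (by omega)
  refine ⟨s, hsnv, hg_decomp ▸ hgI, ?_⟩
  have hcalc : (X y * q + r) * c - q * (X y * c + s) = r * c - q * s := by ring
  rw [hcalc]
  refine mem_Nyd_of_noVar ?_ ((hr.mul hcv).sub (hq.mul hsnv))
  have : r * c - q * s = (X y * q + r) * c - q * g := by rw [hg_decomp]; ring
  rw [this]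
  exact I.sub_mem (Ideal.mul_mem_right c I hqrI) (I.mul_mem_left q hgI)

/-- `w·C ⊆ q·I + N`. -/
lemma L1 (hgvd_eq : inYIdeal y I = Cyd y I ⊓ (Nyd y I + Ideal.span {X y}))
    (hq : NoVar y q) (hr : NoVar y r) (hqrI : X y * q + r ∈ I)
    {c : MvPolynomial σ κ} (hc : c ∈ Cyd y I) :
    ∃ g ∈ I, (X y * q + r) * c - q * g ∈ Nyd y I := by
  have H : ∀ j : ℕ, ∃ g ∈ I,
      (X y * q + r) * compY y j c - q * g ∈ Nyd y I := by
    intro j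
    have hjC : compY y j c ∈ Cyd y I := compY_mem_Cyd hc j
    obtain ⟨cj, hcjnv, hcjeq⟩ :=
      exists_noVar_of_homog (j := j) (f := compY y j c) (fun _ hb => compY_apply_ne hb)
    have hcjC : cj ∈ Cyd y I := by
      obtain ⟨k, hk⟩ := mem_Cyd.mp hjC
      refine mem_Cyd.mpr ⟨k + j, ?_⟩
      rw [pow_add, mul_assoc, ← hcjeq]
      exact hk
    obtain ⟨sj, hsjnv, hsjI, hsjN⟩ := L1core hgvd_eq hcjC hcjnv hq hr hqrI
    refine ⟨X y ^ j * (X y * cj + sj), Ideal.mul_mem_left _ _ hsjI, ?_⟩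
    have e : (X y * q + r) * compY y j c - q * (X y ^ j * (X y * cj + sj)) =
        X y ^ j * ((X y * q + r) * cj - q * (X y * cj + sj)) := by
      rw [hcjeq]; ring
    rw [e]
    exact Ideal.mul_mem_left _ _ hsjN
  choose g hgI hgN using H
  refine ⟨∑ j ∈ Finset.range (degreeOf y c + 1), g j,
    Ideal.sum_mem _ (fun j _ => hgI j), ?_⟩
  have e : ∑ j ∈ Finset.range (degreeOf y c + 1),
        ((X y * q + r) * compY y j c - q * g j) =
      (X y * q + r) * c - q * (∑ j ∈ Finset.range (degreeOf y c + 1), g j) := by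
    rw [Finset.sum_sub_distrib, ← Finset.mul_sum, ← Finset.mul_sum, sum_compY]
  rw [← e]
  exact Ideal.sum_mem _ fun j _ => hgN j

/-- `q·I ⊆ w·C + N`. -/
lemma L2 (hgvd_eq : inYIdeal y I = Cyd y I ⊓ (Nyd y I + Ideal.span {X y}))
    (hq : NoVar y q) (hr : NoVar y r) (hqrI : X y * q + r ∈ I) :
    ∀ m : ℕ, ∀ h ∈ I, degreeOf y h ≤ m →
      ∃ c ∈ Cyd y I, q * h - (X y * q + r) * c ∈ Nyd y I := by
  intro m
  induction m with
  | zero =>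
    intro h hI hd
    have hnv : NoVar y h := noVar_iff_degreeOf.mpr (Nat.le_zero.mp hd)
    exact ⟨0, zero_mem _, by
      rw [mul_zero, sub_zero]
      exact Ideal.mul_mem_left _ _ (mem_Nyd_of_noVar hI hnv)⟩
  | succ m ih =>
    intro h hI hd
    by_cases hdm : degreeOf y h ≤ m
    · exact ih h hI hdm
    · have hdeq : degreeOf y h = m + 1 := by omega
      -- the leading coefficient
      have hin : inY y h ∈ inYIdeal y I := Ideal.subset_span ⟨h, hI, rfl⟩
      obtain ⟨c0, hc0nv, hc0eq⟩ := exists_noVar_of_homog (y := y) (j := m + 1) (f := inY y h)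
        (fun b hb => by
          have := compY_apply_ne (y := y) (f := h) (j := degreeOf y h)
            (by rw [← inY_eq_compY]; exact hb)
          omega)
      have hc0C : c0 ∈ Cyd y I := mem_Cyd.mpr ⟨m + 1, by rw [← hc0eq]; exact hin⟩
      obtain ⟨s, hsnv, hsI, hsN⟩ := L1core hgvd_eq hc0C hc0nv hq hr hqrI
      set e := X y ^ m * (X y * c0 + s) with he
      have heI : e ∈ I := Ideal.mul_mem_left _ _ hsI
      -- degree bound for h - e
      have hcomp : compY y (m + 1) h = X y ^ (m + 1) * c0 := by
        rw [← hc0eq, inY_eq_compY, hdeq]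
      have hde : degreeOf y (h - e) ≤ m := by
        have hsplit : h - e = (h - compY y (m + 1) h) - X y ^ m * s := by
          rw [hcomp, he]; ring
        have hd1 : degreeOf y (h - compY y (m + 1) h) ≤ m := by
          rw [degreeOf_le_iff]
          intro b hb
          rw [mem_support_iff, coeff_sub, coeff_compY] at hb
          by_cases hby : b y = m + 1
          · rw [if_pos hby, sub_self] at hb; exact absurd rfl hb
          · have hbh : coeff b h ≠ 0 := by
              intro h0; rw [if_neg hby, h0, sub_zero] at hb; exact hb rfl
            have := monomial_le_degreeOf y (mem_support_iff.mpr hbh)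
            omega
        have hd2 : degreeOf y (X y ^ m * s) ≤ m := by
          have := degreeOf_X_pow_mul_le (y := y) m s
          have h0 := noVar_iff_degreeOf.mp hsnv
          omega
        have hneg : degreeOf y (-(X y ^ m * s)) = degreeOf y (X y ^ m * s) := by
          rw [degreeOf_eq_sup, degreeOf_eq_sup, support_neg]
        have := degreeOf_add_le y (h - compY y (m + 1) h) (-(X y ^ m * s))
        rw [hneg, ← sub_eq_add_neg, ← hsplit] at this
        omega
      obtain ⟨c1, hc1C, hc1N⟩ := ih (h - e) (I.sub_mem hI heI) hde
      refine ⟨c1 + X y ^ m * c0, Ideal.add_mem _ hc1C (Ideal.mul_mem_left _ _ hc0C), ?_⟩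
      have ecalc : q * h - (X y * q + r) * (c1 + X y ^ m * c0) =
          (q * (h - e) - (X y * q + r) * c1) +
            X y ^ m * (q * (X y * c0 + s) - (X y * q + r) * c0) := by
        rw [he]; ring
      rw [ecalc]
      refine Ideal.add_mem _ hc1N (Ideal.mul_mem_left _ _ ?_)
      have : q * (X y * c0 + s) - (X y * q + r) * c0 =
          -((X y * q + r) * c0 - q * (X y * c0 + s)) := by ring
      rw [this]
      exact neg_mem hsN

end MainLemmas
section Assembly
set_option linter.unusedSectionVars false
set_option synthInstance.maxHeartbeats 1000000
set_option maxHeartbeats 1000000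
variable {κ : Type*} [Field κ] {σ : Type*} [DecidableEq σ] {y : σ}
  {I : Ideal (MvPolynomial σ κ)} {q r : MvPolynomial σ κ}

lemma main_iso (hgvd_eq : inYIdeal y I = Cyd y I ⊓ (Nyd y I + Ideal.span {X y}))
    (hq : NoVar y q) (hr : NoVar y r) (hqrI : X y * q + r ∈ I)
    (hqnzd : NZDMod (Nyd y I) q) (hqrnzd : NZDMod (Nyd y I) (X y * q + r)) :
    ∃ ψ : (Submodule.restrictScalars (MvPolynomial σ κ)
            ((Cyd y I).map (Ideal.Quotient.mk (Nyd y I)))) ≃ₗ[MvPolynomial σ κ]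
          (Submodule.restrictScalars (MvPolynomial σ κ)
            (I.map (Ideal.Quotient.mk (Nyd y I)))),
      ∀ (f : MvPolynomial σ κ) (hf : f ∈ Cyd y I) (gf : MvPolynomial σ κ),
        f * (X y * q + r) - gf * q ∈ Nyd y I →
          (ψ ⟨Ideal.Quotient.mk (Nyd y I) f, Ideal.mem_map_of_mem _ hf⟩ :
            MvPolynomial σ κ ⧸ Nyd y I) = Ideal.Quotient.mk (Nyd y I) gf := by
  classical
  set π : MvPolynomial σ κ →+* MvPolynomial σ κ ⧸ Nyd y I := Ideal.Quotient.mk (Nyd y I)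
    with hπ
  have hqNZ : ∀ x : MvPolynomial σ κ ⧸ Nyd y I, π q * x = 0 → x = 0 := by
    intro x hx
    obtain ⟨a, rfl⟩ := Ideal.Quotient.mk_surjective x
    rw [show (Ideal.Quotient.mk (Nyd y I)) a = π a from rfl, ← map_mul,
      Ideal.Quotient.eq_zero_iff_mem] at hx
    exact Ideal.Quotient.eq_zero_iff_mem.mpr (hqnzd a hx)
  have hwNZ : ∀ x : MvPolynomial σ κ ⧸ Nyd y I, π (X y * q + r) * x = 0 → x = 0 := by
    intro x hx
    obtain ⟨a, rfl⟩ := Ideal.Quotient.mk_surjective x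
    rw [show (Ideal.Quotient.mk (Nyd y I)) a = π a from rfl, ← map_mul,
      Ideal.Quotient.eq_zero_iff_mem] at hx
    exact Ideal.Quotient.eq_zero_iff_mem.mpr (hqrnzd a hx)
  set A := Submodule.restrictScalars (MvPolynomial σ κ) ((Cyd y I).map π) with hA
  set B := Submodule.restrictScalars (MvPolynomial σ κ) (I.map π) with hB
  set f₁ : A →ₗ[MvPolynomial σ κ] (MvPolynomial σ κ ⧸ Nyd y I) :=
    (LinearMap.mulLeft (MvPolynomial σ κ) (π (X y * q + r))).comp A.subtype with hf₁
  set g₁ : B →ₗ[MvPolynomial σ κ] (MvPolynomial σ κ ⧸ Nyd y I) :=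
    (LinearMap.mulLeft (MvPolynomial σ κ) (π q)).comp B.subtype with hg₁
  have f₁_apply : ∀ a : A, f₁ a = π (X y * q + r) * (a : MvPolynomial σ κ ⧸ Nyd y I) :=
    fun a => rfl
  have g₁_apply : ∀ b : B, g₁ b = π q * (b : MvPolynomial σ κ ⧸ Nyd y I) := fun b => rfl
  have hf₁inj : Function.Injective f₁ := by
    intro a b hab
    rw [f₁_apply, f₁_apply] at hab
    refine Subtype.ext ?_
    rw [← sub_eq_zero]
    exact hwNZ _ (by rw [mul_sub, hab, sub_self])
  have hg₁inj : Function.Injective g₁ := by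
    intro a b hab
    rw [g₁_apply, g₁_apply] at hab
    refine Subtype.ext ?_
    rw [← sub_eq_zero]
    exact hqNZ _ (by rw [mul_sub, hab, sub_self])
  have hrange : LinearMap.range f₁ = LinearMap.range g₁ := by
    apply le_antisymm
    · rintro x ⟨⟨xc, hxc⟩, rfl⟩
      rw [Submodule.restrictScalars_mem] at hxc
      obtain ⟨c, hcC, rfl⟩ :=
        (Ideal.mem_map_iff_of_surjective π Ideal.Quotient.mk_surjective).mp hxc
      obtain ⟨g, hgI, hgN⟩ := L1 hgvd_eq hq hr hqrI hcC
      refine ⟨⟨π g, Submodule.restrictScalars_mem _ _ _ |>.mpr (Ideal.mem_map_of_mem π hgI)⟩, ?_⟩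
      rw [g₁_apply, f₁_apply]
      have h0 : π ((X y * q + r) * c - q * g) = 0 := Ideal.Quotient.eq_zero_iff_mem.mpr hgN
      rw [map_sub, map_mul, map_mul, sub_eq_zero] at h0
      exact h0.symm
    · rintro x ⟨⟨xh, hxh⟩, rfl⟩
      rw [Submodule.restrictScalars_mem] at hxh
      obtain ⟨h, hhI, rfl⟩ :=
        (Ideal.mem_map_iff_of_surjective π Ideal.Quotient.mk_surjective).mp hxh
      obtain ⟨c, hcC, hcN⟩ := L2 hgvd_eq hq hr hqrI (degreeOf y h) h hhI le_rfl
      refine ⟨⟨π c, Submodule.restrictScalars_mem _ _ _ |>.mpr (Ideal.mem_map_of_mem π hcC)⟩, ?_⟩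
      rw [g₁_apply, f₁_apply]
      have h0 : π (q * h - (X y * q + r) * c) = 0 := Ideal.Quotient.eq_zero_iff_mem.mpr hcN
      rw [map_sub, map_mul, map_mul, sub_eq_zero] at h0
      exact h0.symm
  set e1 := LinearEquiv.ofInjective f₁ hf₁inj
  set e2 := LinearEquiv.ofEq _ _ hrange
  set e3 := (LinearEquiv.ofInjective g₁ hg₁inj).symm
  refine ⟨e1.trans (e2.trans e3), ?_⟩
  intro f hf gf hgfN
  set a : A := ⟨π f, Ideal.mem_map_of_mem π hf⟩
  have key : π q * ((e1.trans (e2.trans e3)) a : MvPolynomial σ κ ⧸ Nyd y I) =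
      π (X y * q + r) * π f := by
    have h3 : ∀ z : LinearMap.range g₁, g₁ (e3 z) = (z : MvPolynomial σ κ ⧸ Nyd y I) := by
      intro z
      have h := LinearEquiv.ofInjective_apply (h := hg₁inj) g₁ (e3 z)
      rw [show (LinearEquiv.ofInjective g₁ hg₁inj) (e3 z) = z from
        (LinearEquiv.ofInjective g₁ hg₁inj).apply_symm_apply z] at h
      exact h.symm
    have h2 : ((e2 (e1 a)) : MvPolynomial σ κ ⧸ Nyd y I) = ((e1 a) :
        MvPolynomial σ κ ⧸ Nyd y I) := rfl
    have h1 : ((e1 a) : MvPolynomial σ κ ⧸ Nyd y I) = f₁ a :=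
      LinearEquiv.ofInjective_apply f₁ a
    rw [LinearEquiv.trans_apply, LinearEquiv.trans_apply, ← g₁_apply, h3, h2, h1, f₁_apply]
  have hgfq : π q * π gf = π (X y * q + r) * π f := by
    have h0 : π (f * (X y * q + r) - gf * q) = 0 := Ideal.Quotient.eq_zero_iff_mem.mpr hgfN
    rw [map_sub, map_mul, map_mul, sub_eq_zero] at h0
    rw [mul_comm (π q) (π gf), ← h0, mul_comm]
  have hz : π q * (((e1.trans (e2.trans e3)) a : MvPolynomial σ κ ⧸ Nyd y I) - π gf) = 0 := by
    rw [mul_sub, key, hgfq, sub_self]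
  have hfin := hqNZ _ hz
  rwa [sub_eq_zero] at hfin

end Assembly
set_option synthInstance.maxHeartbeats 1000000 in
/-- Part (3): the assignment `f ↦ g_f` induces an `S`-module isomorphism
`ψ : C(x_n,I)/N(x_n,I) → I/N(x_n,I)`, where both are viewed as `S`-submodules of
`S/N(x_n,I)`. -/
theorem gvd_part3 {p : ℕ} [Fact p.Prime] {κ : Type*} [Field κ] [CharP κ p] [PerfectRing κ p]
    {n : ℕ} (I : Ideal (MvPolynomial (Fin (n + 1)) κ))
    (hgvd : IsNondegGVD (Fin.last n) I)
    (hemb : NoEmbeddedPrimes (Nyd (Fin.last n) I))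
    (q r : MvPolynomial (Fin (n + 1)) κ)
    (hqC : q ∈ Cyd (Fin.last n) I)
    (hq : NoVar (Fin.last n) q) (hr : NoVar (Fin.last n) r)
    (hqrI : X (Fin.last n) * q + r ∈ I)
    (hqnzd : NZDMod (Nyd (Fin.last n) I) q)
    (hqrnzd : NZDMod (Nyd (Fin.last n) I) (X (Fin.last n) * q + r)) :
    ∃ ψ : (Submodule.restrictScalars (MvPolynomial (Fin (n + 1)) κ)
            ((Cyd (Fin.last n) I).map (Ideal.Quotient.mk (Nyd (Fin.last n) I)))) ≃ₗ[MvPolynomial (Fin (n + 1)) κ]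
          (Submodule.restrictScalars (MvPolynomial (Fin (n + 1)) κ)
            (I.map (Ideal.Quotient.mk (Nyd (Fin.last n) I)))),
      ∀ (f : MvPolynomial (Fin (n + 1)) κ) (hf : f ∈ Cyd (Fin.last n) I)
        (gf : MvPolynomial (Fin (n + 1)) κ),
        f * (X (Fin.last n) * q + r) - gf * q ∈ Nyd (Fin.last n) I →
          (ψ ⟨Ideal.Quotient.mk (Nyd (Fin.last n) I) f,
              Ideal.mem_map_of_mem _ hf⟩ :
            MvPolynomial (Fin (n + 1)) κ ⧸ Nyd (Fin.last n) I) =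
            Ideal.Quotient.mk (Nyd (Fin.last n) I) gf := by
  exact main_iso hgvd.1.1 hq hr hqrI hqnzd hqrnzd
end
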